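/- arXiv:2102.12910 — 5 statements merged into one kernel-verified Lean document; each statement's English description precedes it below -/
import Mathlib

section
/- For every n ∈ ℕ there exists a constant C = C(n) > 0 such that the following holds. Let r > 0, ε ∈ (0,1), and let f : B_r^{ℝ^n}(0) → ℝ^d with d > n be an (εr)-isometry. Then there exists an isometry I : ℝ^n → ℝ^d such that I(0) = f(0) and |I(u) − f(u)| ≤ C·√ε·r for every u ∈ B_r^{ℝ^n}(0). -/
open Metric Set

noncomputable section

/-- Gromov–Hausdorff distance via metrics on the disjoint union. -/
def ghDist (X Y : Type) [MetricSpace X] [MetricSpace Y] : ℝ :=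
  sInf {r : ℝ | ∃ M : MetricSpace (X ⊕ Y),
    (∀ a b : X, @dist _ M.toPseudoMetricSpace.toDist (Sum.inl a) (Sum.inl b) = dist a b) ∧
    (∀ a b : Y, @dist _ M.toPseudoMetricSpace.toDist (Sum.inr a) (Sum.inr b) = dist a b) ∧
    @Metric.hausdorffDist _ M.toPseudoMetricSpace (Set.range Sum.inl) (Set.range Sum.inr) ≤ r}

def planeHD {d : ℕ} (S : Set (EuclideanSpace ℝ (Fin d)))
    (Γ : AffineSubspace ℝ (EuclideanSpace ℝ (Fin d)))
    (x : EuclideanSpace ℝ (Fin d)) (r : ℝ) : ℝ :=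
  r⁻¹ * Metric.hausdorffDist (S ∩ Metric.ball x r)
    ((Γ : Set (EuclideanSpace ℝ (Fin d))) ∩ Metric.ball x r)

def planeSup {d : ℕ} (S : Set (EuclideanSpace ℝ (Fin d)))
    (Γ : AffineSubspace ℝ (EuclideanSpace ℝ (Fin d)))
    (x : EuclideanSpace ℝ (Fin d)) (r : ℝ) : ℝ :=
  r⁻¹ * sSup ((fun y => Metric.infDist y (Γ : Set (EuclideanSpace ℝ (Fin d)))) ''
    (S ∩ Metric.ball x r))

def alphaNum (n : ℕ) {d : ℕ} (S : Set (EuclideanSpace ℝ (Fin d)))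
    (x : EuclideanSpace ℝ (Fin d)) (r : ℝ) : ℝ :=
  sInf {t : ℝ | ∃ Γ : AffineSubspace ℝ (EuclideanSpace ℝ (Fin d)),
    x ∈ Γ ∧ Module.finrank ℝ Γ.direction = n ∧ t = planeHD S Γ x r}

def betaNum (n : ℕ) {d : ℕ} (S : Set (EuclideanSpace ℝ (Fin d)))
    (x : EuclideanSpace ℝ (Fin d)) (r : ℝ) : ℝ :=
  sInf {t : ℝ | ∃ Γ : AffineSubspace ℝ (EuclideanSpace ℝ (Fin d)),
    x ∈ Γ ∧ Module.finrank ℝ Γ.direction = n ∧ t = planeSup S Γ x r}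

def aTilde (n : ℕ) {d : ℕ} (S : Set (EuclideanSpace ℝ (Fin d)))
    (x : EuclideanSpace ℝ (Fin d)) (r : ℝ) : ℝ :=
  r⁻¹ * ghDist (↥(S ∩ Metric.ball x r)) (↥(Metric.ball (0 : EuclideanSpace ℝ (Fin n)) r))

def bTilde (n : ℕ) {d : ℕ} (S : Set (EuclideanSpace ℝ (Fin d)))
    (x : EuclideanSpace ℝ (Fin d)) (r : ℝ) : ℝ :=
  r⁻¹ * sInf {δ : ℝ | 0 < δ ∧
    ∃ f : ↥(S ∩ Metric.ball x r) → ↥(Metric.ball (0 : EuclideanSpace ℝ (Fin n)) r),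
      ∀ a b, |dist (f a) (f b) - dist a b| < δ}

def alphaSeq (n : ℕ) {d : ℕ} (S : Set (EuclideanSpace ℝ (Fin d))) (i : ℤ) : ℝ :=
  sSup ((fun x => alphaNum n S x ((2 : ℝ) ^ (-i))) '' (S ∩ Metric.ball 0 1))

def betaSeq (n : ℕ) {d : ℕ} (S : Set (EuclideanSpace ℝ (Fin d))) (i : ℤ) : ℝ :=
  sSup ((fun x => betaNum n S x ((2 : ℝ) ^ (-i))) '' (S ∩ Metric.ball 0 1))

def aTildeSeq (n : ℕ) {d : ℕ} (S : Set (EuclideanSpace ℝ (Fin d))) (ε : ℝ) (i : ℤ) : ℝ :=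
  sSup ((fun x => aTilde n S x ((2 : ℝ) ^ (-i))) '' (S ∩ Metric.ball 0 (1 - ε)))

def bTildeSeq (n : ℕ) {d : ℕ} (S : Set (EuclideanSpace ℝ (Fin d))) (ε : ℝ) (i : ℤ) : ℝ :=
  sSup ((fun x => bTilde n S x ((2 : ℝ) ^ (-i))) '' (S ∩ Metric.ball 0 (1 - ε)))

def planeDist {d : ℕ} (Γ₁ Γ₂ : AffineSubspace ℝ (EuclideanSpace ℝ (Fin d))) : ℝ :=
  Metric.hausdorffDist
    ((Γ₁.direction : Set (EuclideanSpace ℝ (Fin d))) ∩ Metric.closedBall 0 1)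
    ((Γ₂.direction : Set (EuclideanSpace ℝ (Fin d))) ∩ Metric.closedBall 0 1)

def simplexVol (n : ℕ) {d : ℕ} (p : Fin (n + 1) → EuclideanSpace ℝ (Fin d)) : ℝ :=
  Real.sqrt (Matrix.det (Matrix.of fun i j : Fin n =>
    (inner ℝ (p i.succ - p 0) (p j.succ - p 0) : ℝ))) / (n.factorial : ℝ)

def IsRealizingPlane (n : ℕ) {d : ℕ} (C' : ℝ) (S : Set (EuclideanSpace ℝ (Fin d)))
    (Γ : AffineSubspace ℝ (EuclideanSpace ℝ (Fin d))) (x : EuclideanSpace ℝ (Fin d))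
    (r : ℝ) : Prop :=
  x ∈ Γ ∧ Module.finrank ℝ Γ.direction = n ∧ planeSup S Γ x r = betaNum n S x r ∧
    planeHD S Γ x r ≤ C' * alphaNum n S x r

open scoped RealInnerProductSpace

open Finset in
open scoped RealInnerProductSpace in
private lemma aux_orthonormalize (n : ℕ) :
    ∃ c : ℝ, 1 ≤ c ∧ ∀ (F : Type) [NormedAddCommGroup F] [InnerProductSpace ℝ F],
      ∀ (u : Fin n → F) (η : ℝ), 0 ≤ η → η * c ≤ 1 →
      (∀ i j, |(⟪u i, u j⟫) - if i = j then 1 else 0| ≤ η) →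
      ∃ w : Fin n → F, Orthonormal ℝ w ∧ ∀ i, ‖w i - u i‖ ≤ c * η := by
  induction n with
  | zero =>
    refine ⟨1, le_refl _, ?_⟩
    intro F _ _ u η hη0 hηc hu
    refine ⟨fun i => i.elim0, ?_, fun i => i.elim0⟩
    rw [orthonormal_iff_ite]
    exact fun i => i.elim0
  | succ n ih =>
    obtain ⟨c, hc1, H⟩ := ih
    refine ⟨6 * (n : ℝ) * c + 6 * c + 2, by nlinarith [Nat.cast_nonneg (α := ℝ) n], ?_⟩
    intro F _ _ u η hη0 hηc hu
    have hn0 : (0:ℝ) ≤ (n:ℝ) := Nat.cast_nonneg n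
    have hc0 : (0:ℝ) ≤ c := by linarith
    have hη1 : η ≤ 1 := by nlinarith [mul_nonneg (mul_nonneg hη0 hn0) hc0, mul_nonneg hη0 hc0]
    obtain ⟨w, hwo, hwc⟩ :=
      H F (fun i => u i.castSucc) η hη0
        (by nlinarith [mul_nonneg (mul_nonneg hη0 hn0) hc0, mul_nonneg hη0 hc0])
        (fun i j => by simpa [Fin.castSucc_inj] using hu i.castSucc j.castSucc)
    set L : Fin (n + 1) := Fin.last n with hL
    have hLL := hu L L
    rw [if_pos rfl] at hLL
    obtain ⟨hLL1, hLL2⟩ := abs_le.mp hLL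
    have hsq : ⟪u L, u L⟫ = ‖u L‖ ^ 2 := real_inner_self_eq_norm_sq (u L)
    have hnL2 : ‖u L‖ ≤ 2 := by nlinarith [norm_nonneg (u L)]
    have habsL : |‖u L‖ - 1| ≤ η := by
      rw [abs_le]
      constructor <;> nlinarith [norm_nonneg (u L)]
    have hinner_uLw : ∀ i : Fin n, |⟪u L, w i⟫| ≤ 3 * c * η := by
      intro i
      have h1 : ⟪u L, w i⟫ = ⟪u L, u i.castSucc⟫ + ⟪u L, w i - u i.castSucc⟫ := by
        rw [inner_sub_right]; ring
      have h2 : |⟪u L, u i.castSucc⟫| ≤ η := by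
        have := hu L i.castSucc
        rw [if_neg (Fin.castSucc_lt_last i).ne'] at this
        simpa using this
      have h3 : |⟪u L, w i - u i.castSucc⟫| ≤ 2 * (c * η) := by
        refine le_trans (abs_real_inner_le_norm _ _) ?_
        have := hwc i
        have h4 := norm_nonneg (w i - u i.castSucc)
        nlinarith
      rw [h1]
      calc |⟪u L, u i.castSucc⟫ + ⟪u L, w i - u i.castSucc⟫|
          ≤ |⟪u L, u i.castSucc⟫| + |⟪u L, w i - u i.castSucc⟫| := abs_add_le _ _
        _ ≤ 3 * c * η := by nlinarith
    set x : F := u L - ∑ i, ⟪u L, w i⟫ • w i with hx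
    have hxu : ‖x - u L‖ ≤ 3 * n * c * η := by
      have h1 : x - u L = -∑ i, ⟪u L, w i⟫ • w i := by rw [hx]; abel
      rw [h1, norm_neg]
      calc ‖∑ i, ⟪u L, w i⟫ • w i‖ ≤ ∑ i, ‖⟪u L, w i⟫ • w i‖ := norm_sum_le _ _
        _ ≤ ∑ _i : Fin n, 3 * c * η := by
            refine sum_le_sum fun i _ => ?_
            rw [norm_smul, hwo.1 i, mul_one, Real.norm_eq_abs]
            exact hinner_uLw i
        _ = 3 * n * c * η := by simp [Finset.sum_const, Finset.card_univ]; ring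
    have hx_w : ∀ i, ⟪x, w i⟫ = 0 := by
      intro i
      rw [hx, inner_sub_left, hwo.inner_left_fintype]
      simp
    have hxnorm : |‖x‖ - 1| ≤ (3 * n * c + 1) * η := by
      have h1 : |‖x‖ - ‖u L‖| ≤ ‖x - u L‖ := abs_norm_sub_norm_le _ _
      calc |‖x‖ - 1| ≤ |‖x‖ - ‖u L‖| + |‖u L‖ - 1| := by
            have := abs_add_le (‖x‖ - ‖u L‖) (‖u L‖ - 1); simpa using this
        _ ≤ (3 * n * c + 1) * η := by nlinarith
    have hxpos : (1:ℝ)/2 ≤ ‖x‖ := by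
      obtain ⟨h1, h2⟩ := abs_le.mp hxnorm
      nlinarith
    have hxne : ‖x‖ ≠ 0 := by positivity
    refine ⟨Fin.snoc w (‖x‖⁻¹ • x), ?_, ?_⟩
    · rw [orthonormal_iff_ite]
      intro i j
      refine Fin.lastCases ?_ ?_ i
      · refine Fin.lastCases ?_ ?_ j
        · simp only [Fin.snoc_last, if_pos rfl, ↓reduceIte]
          rw [real_inner_smul_left, real_inner_smul_right, real_inner_self_eq_norm_sq]
          field_simp
          try ring
        · intro j
          simp only [Fin.snoc_last, Fin.snoc_castSucc,
            if_neg (Fin.castSucc_lt_last j).ne']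
          rw [real_inner_smul_left, hx_w j, mul_zero]
      · intro i
        refine Fin.lastCases ?_ ?_ j
        · simp only [Fin.snoc_last, Fin.snoc_castSucc,
            if_neg (Fin.castSucc_lt_last i).ne]
          rw [real_inner_smul_right, real_inner_comm, hx_w i, mul_zero]
        · intro j
          simp only [Fin.snoc_castSucc, Fin.castSucc_inj]
          exact orthonormal_iff_ite.mp hwo i j
    · intro i
      refine Fin.lastCases ?_ ?_ i
      · rw [Fin.snoc_last]
        have h1 : ‖x‖⁻¹ • x - x = (‖x‖⁻¹ - 1) • x := by rw [sub_smul, one_smul]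
      
        have h2 : ‖‖x‖⁻¹ • x - x‖ = |1 - ‖x‖| := by
          rw [h1, norm_smul, Real.norm_eq_abs, ← abs_norm x, ← abs_mul]
          congr 1
          field_simp
          rw [abs_norm]
          try ring
        calc ‖‖x‖⁻¹ • x - u L‖ ≤ ‖‖x‖⁻¹ • x - x‖ + ‖x - u L‖ := by
              have := norm_add_le (‖x‖⁻¹ • x - x) (x - u L); simpa using this
          _ ≤ (3 * n * c + 1) * η + 3 * n * c * η := by
              rw [h2]
              have : |1 - ‖x‖| = |‖x‖ - 1| := abs_sub_comm _ _
              rw [this]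
              linarith
          _ ≤ (6 * (n : ℝ) * c + 6 * c + 2) * η := by nlinarith
      · intro i
        rw [Fin.snoc_castSucc]
        calc ‖w i - u i.castSucc‖ ≤ c * η := hwc i
          _ ≤ (6 * (n : ℝ) * c + 6 * c + 2) * η := by
            nlinarith [mul_nonneg (mul_nonneg hη0 hn0) hc0, mul_nonneg hη0 hc0]

open Finset in
open scoped RealInnerProductSpace in
private lemma exists_linIso {F : Type} [NormedAddCommGroup F] [InnerProductSpace ℝ F] {n : ℕ}
    (w : Fin n → F) (hw : Orthonormal ℝ w) :
    ∃ T : EuclideanSpace ℝ (Fin n) →ₗᵢ[ℝ] F, ∀ u : EuclideanSpace ℝ (Fin n),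
      T u = ∑ i, u i • w i := by
  set L : EuclideanSpace ℝ (Fin n) →ₗ[ℝ] F :=
    ∑ i : Fin n, ((LinearMap.proj i).comp
      (WithLp.linearEquiv 2 ℝ (∀ _ : Fin n, ℝ)).toLinearMap).smulRight (w i) with hLdef
  have hL : ∀ u : EuclideanSpace ℝ (Fin n), L u = ∑ i, u i • w i := by
    intro u
    rw [hLdef]
    simp [LinearMap.sum_apply, LinearMap.smulRight_apply]
  have hinner : ∀ x y : EuclideanSpace ℝ (Fin n), ⟪L x, L y⟫ = ⟪x, y⟫ := by
    intro x y
    rw [hL, hL, hw.inner_sum]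
    simp [PiLp.inner_apply]
    exact Finset.sum_congr rfl fun i _ => mul_comm _ _
  exact ⟨L.isometryOfInner hinner, fun u => by rw [← hL u]; rfl⟩

set_option maxHeartbeats 1000000 in
theorem stmt7 (n : ℕ) :
    ∃ C : ℝ, 0 < C ∧
      ∀ (d : ℕ) (r ε : ℝ)
        (f : EuclideanSpace ℝ (Fin n) → EuclideanSpace ℝ (Fin d)),
        n < d → 0 < r → ε ∈ Set.Ioo (0 : ℝ) 1 →
        (∀ a ∈ Metric.ball (0 : EuclideanSpace ℝ (Fin n)) r,
          ∀ b ∈ Metric.ball (0 : EuclideanSpace ℝ (Fin n)) r,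
            |dist (f a) (f b) - dist a b| < ε * r) →
        ∃ I : EuclideanSpace ℝ (Fin n) → EuclideanSpace ℝ (Fin d),
          Isometry I ∧ I 0 = f 0 ∧
            ∀ u ∈ Metric.ball (0 : EuclideanSpace ℝ (Fin n)) r,
              ‖I u - f u‖ ≤ C * Real.sqrt ε * r := by
  obtain ⟨c, hc1, Hc⟩ := aux_orthonormalize n
  have hc0 : (0:ℝ) < c := lt_of_lt_of_le one_pos hc1
  set K : ℝ := 8 + (n : ℝ) * (32 + 128 * c) with hK
  have hK0 : (0:ℝ) < K := by positivity
  refine ⟨Real.sqrt K + 3 * Real.sqrt (32 * c) + 1, by positivity, ?_⟩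
  intro d r ε f hd hr hε hf
  obtain ⟨hε0, hε1⟩ := hε
  set g : EuclideanSpace ℝ (Fin n) → EuclideanSpace ℝ (Fin d) :=
    fun a => f a - f 0 with hg
  have hdist : ∀ a ∈ Metric.ball (0 : EuclideanSpace ℝ (Fin n)) r,
      ∀ b ∈ Metric.ball (0 : EuclideanSpace ℝ (Fin n)) r,
      |‖g a - g b‖ - ‖a - b‖| ≤ ε * r := by
    intro a ha b hb
    have h := hf a ha b hb
    rw [dist_eq_norm, dist_eq_norm] at h
    have h2 : g a - g b = f a - f b := by rw [hg]; beta_reduce; abel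
    rw [h2]
    exact le_of_lt h
  have hnorm : ∀ a ∈ Metric.ball (0 : EuclideanSpace ℝ (Fin n)) r,
      |‖g a‖ - ‖a‖| ≤ ε * r := by
    intro a ha
    have h := hdist a ha 0 (Metric.mem_ball_self hr)
    have h2 : g 0 = 0 := by rw [hg]; simp
    rw [h2, sub_zero, sub_zero] at h
    exact h
  have key : ∀ a ∈ Metric.ball (0 : EuclideanSpace ℝ (Fin n)) r,
      ∀ b ∈ Metric.ball (0 : EuclideanSpace ℝ (Fin n)) r,
      |⟪g a, g b⟫ - ⟪a, b⟫| ≤ 8 * ε * r ^ 2 := by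
    intro a ha b hb
    have hna : ‖a‖ < r := mem_ball_zero_iff.mp ha
    have hnb : ‖b‖ < r := mem_ball_zero_iff.mp hb
    have hεr : (0:ℝ) ≤ ε * r := by positivity
    obtain ⟨h1a, h1b⟩ := abs_le.mp (hdist a ha b hb)
    obtain ⟨h2a, h2b⟩ := abs_le.mp (hnorm a ha)
    obtain ⟨h3a, h3b⟩ := abs_le.mp (hnorm b hb)
    have hab : ‖a - b‖ ≤ 2 * r := by
      calc ‖a - b‖ ≤ ‖a‖ + ‖b‖ := norm_sub_le _ _
        _ ≤ 2 * r := by linarith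
    have hga : ‖g a‖ ≤ 2 * r := by nlinarith
    have hgb : ‖g b‖ ≤ 2 * r := by nlinarith
    have hgab : ‖g a - g b‖ ≤ 3 * r := by nlinarith
    have e1 : |‖g a‖ ^ 2 - ‖a‖ ^ 2| ≤ 3 * ε * r ^ 2 := by
      have hq : ‖g a‖ ^ 2 - ‖a‖ ^ 2 = (‖g a‖ - ‖a‖) * (‖g a‖ + ‖a‖) := by ring
      rw [hq, abs_mul]
      have hb1 : |‖g a‖ + ‖a‖| ≤ 3 * r := by
        rw [abs_of_nonneg (by positivity)]; linarith [norm_nonneg (g a), norm_nonneg a]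
      calc |‖g a‖ - ‖a‖| * |‖g a‖ + ‖a‖| ≤ (ε * r) * (3 * r) :=
            mul_le_mul (hnorm a ha) hb1 (abs_nonneg _) hεr
        _ = 3 * ε * r ^ 2 := by ring
    have e2 : |‖g b‖ ^ 2 - ‖b‖ ^ 2| ≤ 3 * ε * r ^ 2 := by
      have hq : ‖g b‖ ^ 2 - ‖b‖ ^ 2 = (‖g b‖ - ‖b‖) * (‖g b‖ + ‖b‖) := by ring
      rw [hq, abs_mul]
      have hb1 : |‖g b‖ + ‖b‖| ≤ 3 * r := by
        rw [abs_of_nonneg (by positivity)]; linarith [norm_nonneg (g b), norm_nonneg b]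
      calc |‖g b‖ - ‖b‖| * |‖g b‖ + ‖b‖| ≤ (ε * r) * (3 * r) :=
            mul_le_mul (hnorm b hb) hb1 (abs_nonneg _) hεr
        _ = 3 * ε * r ^ 2 := by ring
    have e3 : |‖g a - g b‖ ^ 2 - ‖a - b‖ ^ 2| ≤ 5 * ε * r ^ 2 := by
      have hq : ‖g a - g b‖ ^ 2 - ‖a - b‖ ^ 2
          = (‖g a - g b‖ - ‖a - b‖) * (‖g a - g b‖ + ‖a - b‖) := by ring
      rw [hq, abs_mul]
      have hb1 : |‖g a - g b‖ + ‖a - b‖| ≤ 5 * r := by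
        rw [abs_of_nonneg (by positivity)]
        linarith [norm_nonneg (g a - g b), norm_nonneg (a - b)]
      calc |‖g a - g b‖ - ‖a - b‖| * |‖g a - g b‖ + ‖a - b‖| ≤ (ε * r) * (5 * r) :=
            mul_le_mul (hdist a ha b hb) hb1 (abs_nonneg _) hεr
        _ = 5 * ε * r ^ 2 := by ring
    have hip : ⟪g a, g b⟫ - ⟪a, b⟫ =
        ((‖g a‖ ^ 2 - ‖a‖ ^ 2) + (‖g b‖ ^ 2 - ‖b‖ ^ 2)
          - (‖g a - g b‖ ^ 2 - ‖a - b‖ ^ 2)) / 2 := by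
      have q1 := norm_sub_sq_real (g a) (g b)
      have q2 := norm_sub_sq_real a b
      linarith
    obtain ⟨e1a, e1b⟩ := abs_le.mp e1
    obtain ⟨e2a, e2b⟩ := abs_le.mp e2
    obtain ⟨e3a, e3b⟩ := abs_le.mp e3
    have hr2 : (0:ℝ) ≤ ε * r ^ 2 := by positivity
    rw [hip, abs_le]
    constructor <;> [linarith; linarith]
  by_cases hsmall : ε * (32 * c) ≤ 1
  · -- small ε : genuine construction
    set p : Fin n → EuclideanSpace ℝ (Fin n) :=
      fun i => (r / 2) • EuclideanSpace.single i 1 with hp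
    have hpball : ∀ i, p i ∈ Metric.ball (0 : EuclideanSpace ℝ (Fin n)) r := by
      intro i
      rw [mem_ball_zero_iff, hp]
      simp only [norm_smul, EuclideanSpace.norm_single, norm_one, mul_one, Real.norm_eq_abs]
      rw [abs_of_nonneg (by positivity)]
      linarith
    have hpp : ∀ i j, ⟪p i, p j⟫ = (r ^ 2 / 4) * (if i = j then (1:ℝ) else 0) := by
      intro i j
      by_cases h : i = j
      · subst h
        simp [hp, real_inner_smul_left, real_inner_smul_right,
          EuclideanSpace.inner_single_left, EuclideanSpace.single_apply]
        rw [norm_smul, EuclideanSpace.norm_single, norm_one, mul_one, Real.norm_eq_abs, sq_abs]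
        ring
      · rw [if_neg h, mul_zero]
        simp [hp, real_inner_smul_left, real_inner_smul_right,
          EuclideanSpace.inner_single_left, EuclideanSpace.single_apply,
          h, Ne.symm h]
    have hpu : ∀ i (v : EuclideanSpace ℝ (Fin n)), ⟪p i, v⟫ = (r / 2) * v i := by
      intro i v
      simp [hp, real_inner_smul_left, EuclideanSpace.inner_single_left]
    set uvec : Fin n → EuclideanSpace ℝ (Fin d) := fun i => (2 / r) • g (p i) with huvec
    have hgram : ∀ i j, |⟪uvec i, uvec j⟫ - if i = j then (1:ℝ) else 0| ≤ 32 * ε := by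
      intro i j
      have hid : ⟪uvec i, uvec j⟫ - (if i = j then (1:ℝ) else 0)
          = (4 / r ^ 2) * (⟪g (p i), g (p j)⟫ - ⟪p i, p j⟫) := by
        rw [huvec]
        simp only [real_inner_smul_left, real_inner_smul_right, hpp i j]
        field_simp
        ring
      rw [hid, abs_mul, abs_of_nonneg (by positivity : (0:ℝ) ≤ 4 / r ^ 2)]
      calc (4 / r ^ 2) * |⟪g (p i), g (p j)⟫ - ⟪p i, p j⟫|
          ≤ (4 / r ^ 2) * (8 * ε * r ^ 2) :=
            mul_le_mul_of_nonneg_left (key _ (hpball i) _ (hpball j)) (by positivity)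
        _ = 32 * ε := by field_simp; ring
    obtain ⟨w, hwo, hwc⟩ := Hc (EuclideanSpace ℝ (Fin d)) uvec (32 * ε)
      (by positivity)
      (by calc (32 * ε) * c = ε * (32 * c) := by ring
            _ ≤ 1 := hsmall)
      hgram
    obtain ⟨T, hT⟩ := exists_linIso w hwo
    refine ⟨fun v => f 0 + T v, ?_, by simp, ?_⟩
    · apply Isometry.of_dist_eq
      intro a b
      show dist (f 0 + T a) (f 0 + T b) = dist a b
      rw [dist_add_left, T.dist_map]
    · intro v hv
      have hnv : ‖v‖ < r := mem_ball_zero_iff.mp hv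
      obtain ⟨hgva, hgvb⟩ := abs_le.mp (hnorm v hv)
      have hgv2r : ‖g v‖ ≤ 2 * r := by nlinarith
      have hvi : ∀ i, |v i| ≤ r := by
        intro i
        have h1 : ⟪EuclideanSpace.single i (1:ℝ), v⟫ = v i := by
          simp [EuclideanSpace.inner_single_left]
        have h2 := abs_real_inner_le_norm (EuclideanSpace.single i (1:ℝ)) v
        rw [h1, EuclideanSpace.norm_single] at h2
        simp only [norm_one, one_mul] at h2
        linarith
      have est : ∀ i, |⟪w i, g v⟫ - v i| ≤ (16 + 64 * c) * (ε * r) := by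
        intro i
        have h1 : |⟪uvec i, g v⟫ - v i| ≤ 16 * (ε * r) := by
          have hkey := key (p i) (hpball i) v hv
          have hid : ⟪uvec i, g v⟫ - v i = (2 / r) * (⟪g (p i), g v⟫ - ⟪p i, v⟫) := by
            rw [huvec]
            simp only [real_inner_smul_left, hpu i v]
            field_simp
          rw [hid, abs_mul, abs_of_nonneg (by positivity : (0:ℝ) ≤ 2 / r)]
          calc (2 / r) * |⟪g (p i), g v⟫ - ⟪p i, v⟫| ≤ (2 / r) * (8 * ε * r ^ 2) :=
                mul_le_mul_of_nonneg_left hkey (by positivity)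
            _ = 16 * (ε * r) := by field_simp; ring
        have h2 : |⟪w i - uvec i, g v⟫| ≤ (64 * c) * (ε * r) := by
          refine le_trans (abs_real_inner_le_norm _ _) ?_
          calc ‖w i - uvec i‖ * ‖g v‖ ≤ (c * (32 * ε)) * (2 * r) :=
                mul_le_mul (hwc i) hgv2r (norm_nonneg _) (by positivity)
            _ = (64 * c) * (ε * r) := by ring
        have hid2 : ⟪w i, g v⟫ - v i = (⟪uvec i, g v⟫ - v i) + ⟪w i - uvec i, g v⟫ := by
          rw [inner_sub_left]; ring
        rw [hid2]
        calc |(⟪uvec i, g v⟫ - v i) + ⟪w i - uvec i, g v⟫|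
            ≤ |⟪uvec i, g v⟫ - v i| + |⟪w i - uvec i, g v⟫| := abs_add_le _ _
          _ ≤ (16 + 64 * c) * (ε * r) := by linarith
      have hTg : ⟪T v, g v⟫ = ∑ i, v i * ⟪w i, g v⟫ := by
        rw [hT v, sum_inner]
        exact Finset.sum_congr rfl fun i _ => real_inner_smul_left _ _ _
      have hvv : ∑ i, v i * v i = ‖v‖ ^ 2 := by
        rw [← real_inner_self_eq_norm_sq]
        simp only [PiLp.inner_apply, RCLike.inner_apply, conj_trivial, mul_comm]
      have hsum_err : |∑ i, v i * (⟪w i, g v⟫ - v i)|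
          ≤ (n : ℝ) * (r * ((16 + 64 * c) * (ε * r))) := by
        calc |∑ i, v i * (⟪w i, g v⟫ - v i)| ≤ ∑ i, |v i * (⟪w i, g v⟫ - v i)| :=
              Finset.abs_sum_le_sum_abs _ _
          _ ≤ ∑ _i : Fin n, r * ((16 + 64 * c) * (ε * r)) := by
              refine Finset.sum_le_sum fun i _ => ?_
              rw [abs_mul]
              exact mul_le_mul (hvi i) (est i) (abs_nonneg _) hr.le
          _ = (n : ℝ) * (r * ((16 + 64 * c) * (ε * r))) := by
              simp [Finset.sum_const, Finset.card_univ]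
      have hsplit : ⟪T v, g v⟫ = ‖v‖ ^ 2 + ∑ i, v i * (⟪w i, g v⟫ - v i) := by
        rw [hTg, ← hvv, ← Finset.sum_add_distrib]
        exact Finset.sum_congr rfl fun i _ => by ring
      have hgv2 : ‖g v‖ ^ 2 ≤ ‖v‖ ^ 2 + 8 * ε * r ^ 2 := by
        have h := key v hv v hv
        rw [real_inner_self_eq_norm_sq, real_inner_self_eq_norm_sq] at h
        linarith [(abs_le.mp h).2]
      have hTnorm : ‖T v‖ = ‖v‖ := T.norm_map v
      have hexp : ‖T v - g v‖ ^ 2 ≤ K * ε * r ^ 2 := by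
        have q := norm_sub_sq_real (T v) (g v)
        have h5 := (abs_le.mp hsum_err).1
        have hre : (n : ℝ) * (r * ((16 + 64 * c) * (ε * r))) * 2
            = (n : ℝ) * (32 + 128 * c) * (ε * r ^ 2) := by ring
        rw [q, hTnorm, hsplit, hK]
        nlinarith [hgv2, h5, hre]
      have hfin : ‖T v - g v‖ ≤ Real.sqrt K * Real.sqrt ε * r := by
        have h6 : ‖T v - g v‖ ≤ Real.sqrt (K * ε * r ^ 2) := by
          rw [← Real.sqrt_sq (norm_nonneg (T v - g v))]
          exact Real.sqrt_le_sqrt hexp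
        rwa [show K * ε * r ^ 2 = K * (ε * r ^ 2) from by ring, Real.sqrt_mul hK0.le,
          Real.sqrt_mul hε0.le, Real.sqrt_sq hr.le, ← mul_assoc] at h6
      have hIv : (f 0 + T v) - f v = T v - g v := by rw [hg]; beta_reduce; abel
      show ‖(f 0 + T v) - f v‖ ≤ _
      rw [hIv]
      refine le_trans hfin ?_
      have h7 : (0:ℝ) ≤ Real.sqrt ε * r := by positivity
      have h8 : (0:ℝ) ≤ Real.sqrt (32 * c) := Real.sqrt_nonneg _
      nlinarith [Real.sqrt_nonneg K, mul_nonneg h8 h7]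
  · -- large ε : any isometry works
    have hle : n ≤ d := hd.le
    have hworth : Orthonormal ℝ ((⇑(EuclideanSpace.basisFun (Fin d) ℝ)) ∘ Fin.castLE hle) :=
      (EuclideanSpace.basisFun (Fin d) ℝ).orthonormal.comp _ (Fin.castLE_injective hle)
    obtain ⟨T, hT⟩ := exists_linIso _ hworth
    refine ⟨fun v => f 0 + T v, ?_, by simp, ?_⟩
    · apply Isometry.of_dist_eq
      intro a b
      show dist (f 0 + T a) (f 0 + T b) = dist a b
      rw [dist_add_left, T.dist_map]
    · intro v hv
      have hnv : ‖v‖ < r := mem_ball_zero_iff.mp hv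
      obtain ⟨hgva, hgvb⟩ := abs_le.mp (hnorm v hv)
      have hgv2r : ‖g v‖ ≤ 2 * r := by nlinarith
      have hIv : (f 0 + T v) - f v = T v - g v := by rw [hg]; beta_reduce; abel
      have h3r : ‖(f 0 + T v) - f v‖ ≤ 3 * r := by
        rw [hIv]
        calc ‖T v - g v‖ ≤ ‖T v‖ + ‖g v‖ := norm_sub_le _ _
          _ ≤ 3 * r := by rw [T.norm_map]; linarith
      have h32 : (0:ℝ) < 32 * c := by positivity
      have hεge : 1 / (32 * c) ≤ ε := by
        rw [div_le_iff₀ h32]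
        linarith [not_le.mp hsmall]
      have hsq : 1 ≤ Real.sqrt (32 * c) * Real.sqrt ε := by
        have h9 : Real.sqrt (1 / (32 * c)) ≤ Real.sqrt ε := Real.sqrt_le_sqrt hεge
        have h10 : Real.sqrt (32 * c) * Real.sqrt (1 / (32 * c)) = 1 := by
          rw [← Real.sqrt_mul h32.le, mul_one_div, div_self h32.ne', Real.sqrt_one]
        nlinarith [Real.sqrt_nonneg (32 * c)]
      show ‖(f 0 + T v) - f v‖ ≤ _
      have hKε : (0:ℝ) ≤ Real.sqrt K * Real.sqrt ε := by positivity
      have hsε : (0:ℝ) ≤ Real.sqrt ε := Real.sqrt_nonneg _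
      nlinarith [mul_le_mul_of_nonneg_right hsq hr.le]

end
end

section
/- Let Γ₁, Γ₂ be two n-dimensional affine planes in ℝ^d. Then for any x ∈ Γ₁ and any y ∈ ℝ^d with y ≠ x, one has |x − y|² ≤ |Π(x) − Π(y)|² + |x − y|² · ( d(Γ₁, Γ₂) + dist(y, Γ₁)/|x − y| )², where Π denotes the orthogonal projection onto Γ₂ and dist(y, Γ₁) is the distance from y to Γ₁. -/
open Metric Set

noncomputable section

-- auxiliary: projection residual bound for vectors in Γ₁.direction
lemma aux_proj_bound {d : ℕ} (Γ₁ Γ₂ : AffineSubspace ℝ (EuclideanSpace ℝ (Fin d)))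
    (v : EuclideanSpace ℝ (Fin d)) (hv : v ∈ Γ₁.direction) :
    ‖v - (Submodule.orthogonalProjectionOnto Γ₂.direction v : EuclideanSpace ℝ (Fin d))‖ ≤
      planeDist Γ₁ Γ₂ * ‖v‖ := by
  set K := Γ₂.direction
  -- reduce to infDist
  have key : ∀ w : EuclideanSpace ℝ (Fin d),
      ‖w - (Submodule.orthogonalProjectionOnto K w : EuclideanSpace ℝ (Fin d))‖ ≤ infDist w (K : Set _) := by
    intro w
    rw [infDist_eq_iInf]
    apply le_ciInf
    intro z
    rw [dist_eq_norm, ← Submodule.starProjection_apply, Submodule.starProjection_minimal]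
    exact ciInf_le ⟨0, Set.forall_mem_range.mpr fun _ => norm_nonneg _⟩ (⟨z.1, z.2⟩ : K)
  rcases eq_or_ne v 0 with rfl | hv0
  · simp
  · have hvpos : 0 < ‖v‖ := norm_pos_iff.mpr hv0
    set u := ‖v‖⁻¹ • v with hu
    have hnu : ‖u‖ = 1 := by
      rw [hu, norm_smul, norm_inv, norm_norm, inv_mul_cancel₀ hvpos.ne']
    have huΓ : u ∈ Γ₁.direction := Γ₁.direction.smul_mem _ hv
    have hub : u ∈ (Γ₁.direction : Set _) ∩ Metric.closedBall 0 1 :=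
      ⟨huΓ, by simp [hnu]⟩
    have hfin : EMetric.hausdorffEdist ((Γ₁.direction : Set (EuclideanSpace ℝ (Fin d))) ∩ closedBall 0 1)
        ((K : Set (EuclideanSpace ℝ (Fin d))) ∩ closedBall 0 1) ≠ ⊤ := by
      apply hausdorffEdist_ne_top_of_nonempty_of_bounded
      · exact ⟨0, Γ₁.direction.zero_mem, by simp⟩
      · exact ⟨0, K.zero_mem, by simp⟩
      · exact (isBounded_closedBall).subset inter_subset_right
      · exact (isBounded_closedBall).subset inter_subset_right
    have h1 : infDist u ((K : Set _) ∩ closedBall 0 1) ≤ planeDist Γ₁ Γ₂ :=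
      infDist_le_hausdorffDist_of_mem hub hfin
    have h2 : infDist u (K : Set _) ≤ infDist u ((K : Set _) ∩ closedBall 0 1) :=
      infDist_le_infDist_of_subset inter_subset_left ⟨0, K.zero_mem, by simp⟩
    have h3 : ‖u - (Submodule.orthogonalProjectionOnto K u : EuclideanSpace ℝ (Fin d))‖ ≤ planeDist Γ₁ Γ₂ :=
      (key u).trans (h2.trans h1)
    have hsc : v - (Submodule.orthogonalProjectionOnto K v : EuclideanSpace ℝ (Fin d)) =
        ‖v‖ • (u - (Submodule.orthogonalProjectionOnto K u : EuclideanSpace ℝ (Fin d))) := by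
      rw [hu, smul_sub]
      congr 1
      · rw [smul_smul, mul_inv_cancel₀ hvpos.ne', one_smul]
      · rw [map_smul]
        push_cast
        rw [smul_smul, mul_inv_cancel₀ hvpos.ne', one_smul]
    rw [hsc, norm_smul, norm_norm, mul_comm]
    exact mul_le_mul_of_nonneg_right h3 hvpos.le

set_option maxHeartbeats 2000000 in
theorem stmt9 (n d : ℕ) (hnd : n < d)
    (Γ₁ Γ₂ : AffineSubspace ℝ (EuclideanSpace ℝ (Fin d))) [Nonempty ↥Γ₂]
    (h₁ : Module.finrank ℝ Γ₁.direction = n)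
    (h₂ : Module.finrank ℝ Γ₂.direction = n)
    (x : EuclideanSpace ℝ (Fin d)) (hx : x ∈ Γ₁)
    (y : EuclideanSpace ℝ (Fin d)) (hxy : y ≠ x) :
    ‖x - y‖ ^ 2 ≤
      ‖((EuclideanGeometry.orthogonalProjection Γ₂ x : EuclideanSpace ℝ (Fin d)) -
          (EuclideanGeometry.orthogonalProjection Γ₂ y : EuclideanSpace ℝ (Fin d)))‖ ^ 2 +
        ‖x - y‖ ^ 2 *
          (planeDist Γ₁ Γ₂ +
            Metric.infDist y (Γ₁ : Set (EuclideanSpace ℝ (Fin d))) / ‖x - y‖) ^ 2 := by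
  haveI : Nonempty ↥Γ₁ := ⟨⟨x, hx⟩⟩
  set K := Γ₂.direction with hK
  set Px : EuclideanSpace ℝ (Fin d) := (EuclideanGeometry.orthogonalProjection Γ₂ x : EuclideanSpace ℝ (Fin d))
  set Py : EuclideanSpace ℝ (Fin d) := (EuclideanGeometry.orthogonalProjection Γ₂ y : EuclideanSpace ℝ (Fin d))
  have hD : (0:ℝ) < ‖x - y‖ := by
    rw [norm_pos_iff, sub_ne_zero]; exact fun h => hxy h.symm
  -- decomposition
  set a : EuclideanSpace ℝ (Fin d) := Px - Py with ha
  set r : EuclideanSpace ℝ (Fin d) := (x - Px) - (y - Py) with hr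
  have hsum : x - y = a + r := by rw [ha, hr]; abel
  have haK : a ∈ K :=
    AffineSubspace.vsub_mem_direction
      (EuclideanGeometry.orthogonalProjection_mem x) (EuclideanGeometry.orthogonalProjection_mem y)
  have hrK : r ∈ Kᗮ := by
    apply Submodule.sub_mem
    · exact EuclideanGeometry.vsub_orthogonalProjection_mem_direction_orthogonal Γ₂ x
    · exact EuclideanGeometry.vsub_orthogonalProjection_mem_direction_orthogonal Γ₂ y
  have hortho : (inner ℝ a r : ℝ) = 0 := hrK a haK
  have hpyth : ‖x - y‖ ^ 2 = ‖a‖ ^ 2 + ‖r‖ ^ 2 := by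
    rw [hsum, norm_add_sq_real, hortho]; ring
  -- bound on r: use orthogonal projection of y onto Γ₁
  set y' : EuclideanSpace ℝ (Fin d) := (EuclideanGeometry.orthogonalProjection Γ₁ y : EuclideanSpace ℝ (Fin d)) with hy'
  have hy'mem : y' ∈ Γ₁ := EuclideanGeometry.orthogonalProjection_mem y
  have hxy'dir : x - y' ∈ Γ₁.direction := AffineSubspace.vsub_mem_direction hx hy'mem
  -- ‖y - y'‖ ≤ infDist y Γ₁
  have hyy' : ‖y - y'‖ ≤ Metric.infDist y (Γ₁ : Set (EuclideanSpace ℝ (Fin d))) := by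
    rw [Metric.infDist_eq_iInf]
    apply le_ciInf
    intro z
    have := EuclideanGeometry.dist_sq_eq_dist_orthogonalProjection_sq_add_dist_orthogonalProjection_sq
      (s := Γ₁) (p₁ := (z : EuclideanSpace ℝ (Fin d))) y z.2
    have h1 : dist y y' * dist y y' ≤ dist (z : EuclideanSpace ℝ (Fin d)) y * dist (z : EuclideanSpace ℝ (Fin d)) y := by
      rw [this]; nlinarith [mul_self_nonneg (dist (z:EuclideanSpace ℝ (Fin d)) y'), dist_nonneg (x := y) (y := y')]
    have h2 : dist y y' ≤ dist (z : EuclideanSpace ℝ (Fin d)) y := by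
      nlinarith [dist_nonneg (x := y) (y := y'), dist_nonneg (x := (z:EuclideanSpace ℝ (Fin d))) (y := y)]
    calc ‖y - y'‖ = dist y y' := (dist_eq_norm _ _).symm
      _ ≤ dist (z : EuclideanSpace ℝ (Fin d)) y := h2
      _ = dist y (z : EuclideanSpace ℝ (Fin d)) := dist_comm _ _
  -- ‖x - y'‖ ≤ ‖x - y‖
  have hxy' : ‖x - y'‖ ≤ ‖x - y‖ := by
    have := EuclideanGeometry.dist_sq_eq_dist_orthogonalProjection_sq_add_dist_orthogonalProjection_sq
      (s := Γ₁) (p₁ := x) y hx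
    have h2 : dist x y' ≤ dist x y := by
      nlinarith [dist_nonneg (x := x) (y := y'), dist_nonneg (x := x) (y := y),
        mul_self_nonneg (dist y y')]
    simpa [dist_eq_norm] using h2
  -- r equals orthogonal projection of x - y onto Kᗮ
  have hQr : ((Submodule.orthogonalProjectionOnto Kᗮ (x - y) : Kᗮ) : EuclideanSpace ℝ (Fin d)) = r := by
    have h1 : Submodule.orthogonalProjectionOnto Kᗮ a = 0 :=
      Submodule.orthogonalProjectionOnto_apply_of_mem_orthogonal
        (Submodule.le_orthogonal_orthogonal K haK)
    have h2 : ((Submodule.orthogonalProjectionOnto Kᗮ r : Kᗮ) : EuclideanSpace ℝ (Fin d)) = r := by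
      rw [← Submodule.starProjection_apply, Submodule.starProjection_eq_self_iff]; exact hrK
    rw [hsum, map_add, h1, Submodule.coe_add, Submodule.coe_zero, zero_add, h2]
  -- bound ‖r‖
  have hQle : ∀ v : EuclideanSpace ℝ (Fin d), ‖((Submodule.orthogonalProjectionOnto Kᗮ v : Kᗮ) : EuclideanSpace ℝ (Fin d))‖ ≤ ‖v‖ := by
    intro v
    calc ‖((Submodule.orthogonalProjectionOnto Kᗮ v : Kᗮ) : EuclideanSpace ℝ (Fin d))‖ = ‖(Submodule.orthogonalProjectionOnto Kᗮ v : Kᗮ)‖ := rfl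
      _ ≤ ‖Submodule.orthogonalProjectionOnto Kᗮ‖ * ‖v‖ := (Submodule.orthogonalProjectionOnto Kᗮ).le_opNorm v
      _ ≤ 1 * ‖v‖ := by
          exact mul_le_mul_of_nonneg_right (Submodule.orthogonalProjectionOnto_norm_le _) (norm_nonneg v)
      _ = ‖v‖ := one_mul _
  have hQxy' : ‖((Submodule.orthogonalProjectionOnto Kᗮ (x - y') : Kᗮ) : EuclideanSpace ℝ (Fin d))‖ ≤ planeDist Γ₁ Γ₂ * ‖x - y'‖ := by
    have := aux_proj_bound Γ₁ Γ₂ (x - y') hxy'dir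
    rwa [← Submodule.starProjection_apply, ← Submodule.starProjection_orthogonal_val, Submodule.starProjection_apply] at this
  have hsplit : r = ((Submodule.orthogonalProjectionOnto Kᗮ (x - y') : Kᗮ) : EuclideanSpace ℝ (Fin d)) +
      ((Submodule.orthogonalProjectionOnto Kᗮ (y' - y) : Kᗮ) : EuclideanSpace ℝ (Fin d)) := by
    rw [← hQr]
    have : x - y = (x - y') + (y' - y) := by abel
    rw [this, map_add, Submodule.coe_add]
  have hrle : ‖r‖ ≤ planeDist Γ₁ Γ₂ * ‖x - y‖ + Metric.infDist y (Γ₁ : Set (EuclideanSpace ℝ (Fin d))) := by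
    rw [hsplit]
    calc ‖((Submodule.orthogonalProjectionOnto Kᗮ (x - y') : Kᗮ) : EuclideanSpace ℝ (Fin d)) +
          ((Submodule.orthogonalProjectionOnto Kᗮ (y' - y) : Kᗮ) : EuclideanSpace ℝ (Fin d))‖
        ≤ ‖((Submodule.orthogonalProjectionOnto Kᗮ (x - y') : Kᗮ) : EuclideanSpace ℝ (Fin d))‖ +
          ‖((Submodule.orthogonalProjectionOnto Kᗮ (y' - y) : Kᗮ) : EuclideanSpace ℝ (Fin d))‖ := norm_add_le _ _
      _ ≤ planeDist Γ₁ Γ₂ * ‖x - y'‖ + ‖y' - y‖ := add_le_add hQxy' (hQle _)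
      _ ≤ planeDist Γ₁ Γ₂ * ‖x - y‖ + Metric.infDist y (Γ₁ : Set (EuclideanSpace ℝ (Fin d))) := by
          have hpd : 0 ≤ planeDist Γ₁ Γ₂ := Metric.hausdorffDist_nonneg
          have : ‖y' - y‖ = ‖y - y'‖ := norm_sub_rev _ _
          rw [this]
          exact add_le_add (mul_le_mul_of_nonneg_left hxy' hpd) hyy'
  -- finish
  have hRHS : ‖x - y‖ ^ 2 * (planeDist Γ₁ Γ₂ + Metric.infDist y (Γ₁ : Set (EuclideanSpace ℝ (Fin d))) / ‖x - y‖) ^ 2 =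
      (planeDist Γ₁ Γ₂ * ‖x - y‖ + Metric.infDist y (Γ₁ : Set (EuclideanSpace ℝ (Fin d)))) ^ 2 := by
    field_simp
  rw [hRHS, hpyth]
  have h0 : 0 ≤ ‖r‖ := norm_nonneg _
  nlinarith [hrle, h0, mul_self_nonneg (planeDist Γ₁ Γ₂ * ‖x - y‖ + Metric.infDist y (Γ₁ : Set (EuclideanSpace ℝ (Fin d))) - ‖r‖)]


end
end

section
/- For every n ∈ ℕ there exists a constant C = C(n) ≥ 1 such that the following holds. Let S ⊂ ℝ^d with d > n, let x ∈ S and r > 0 be such that α(x,r) ≤ 1/100. Then there exists an n-dimensional affine plane Γ containing x that realizes β(x,r) (i.e. r^{-1} sup_{y ∈ S ∩ B_r(x)} dist(y, Γ) = β(x,r)) and that moreover satisfies r^{-1} d_H(S ∩ B_r(x), Γ ∩ B_r(x)) ≤ C·α(x,r). -/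
open Metric Set

noncomputable section

namespace Stmt10Aux

variable {d : ℕ}

local notation "E" => EuclideanSpace ℝ (Fin d)

lemma le_infDist' {s : Set E} {x : E} {c : ℝ} (hs : s.Nonempty)
    (h : ∀ y ∈ s, c ≤ dist x y) : c ≤ Metric.infDist x s := by
  by_contra hc
  push_neg at hc
  obtain ⟨y, hy, hxy⟩ := (Metric.infDist_lt_iff hs).mp hc
  exact absurd (h y hy) (not_le.mpr hxy)

lemma infDist_smul_le (W : Submodule ℝ E) {c : ℝ} (hc : 0 < c) (u : E) :
    Metric.infDist (c • u) (W : Set E) ≤ c * Metric.infDist u (W : Set E) := by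
  refine le_of_forall_pos_le_add fun ε hε => ?_
  have hne : (W : Set E).Nonempty := ⟨0, W.zero_mem⟩
  have h1 : Metric.infDist u (W : Set E) < Metric.infDist u (W : Set E) + ε / c := by
    have := div_pos hε hc; linarith
  obtain ⟨w, hw, hdw⟩ := (Metric.infDist_lt_iff hne).mp h1
  have h2 : Metric.infDist (c • u) (W : Set E) ≤ dist (c • u) (c • w) :=
    Metric.infDist_le_dist_of_mem (W.smul_mem c hw)
  rw [dist_smul₀, Real.norm_eq_abs, abs_of_pos hc] at h2
  have h3 : c * dist u w ≤ c * (Metric.infDist u (W : Set E) + ε / c) :=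
    mul_le_mul_of_nonneg_left hdw.le hc.le
  have h4 : c * (ε / c) = ε := by field_simp
  calc Metric.infDist (c • u) (W : Set E) ≤ c * dist u w := h2
    _ ≤ c * Metric.infDist u (W : Set E) + ε := by rw [mul_add, h4] at h3; linarith

lemma infDist_smul (W : Submodule ℝ E) {c : ℝ} (hc : 0 < c) (u : E) :
    Metric.infDist (c • u) (W : Set E) = c * Metric.infDist u (W : Set E) := by
  refine le_antisymm (infDist_smul_le W hc u) ?_
  have h := infDist_smul_le W (inv_pos.mpr hc) (c • u)
  rw [inv_smul_smul₀ hc.ne'] at h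
  have := mul_le_mul_of_nonneg_left h hc.le
  calc c * Metric.infDist u (W : Set E)
      ≤ c * (c⁻¹ * Metric.infDist (c • u) (W : Set E)) := this
    _ = Metric.infDist (c • u) (W : Set E) := by
        rw [← mul_assoc, mul_inv_cancel₀ hc.ne', one_mul]

lemma infDist_add_right (t : Set E) (x u : E) :
    Metric.infDist (u + x) ((fun v => v + x) '' t) = Metric.infDist u t :=
  Metric.infDist_image (Isometry.of_dist_eq fun a b => dist_add_right a b x)

lemma coe_affine_eq (Γ : AffineSubspace ℝ E) {x : E} (hx : x ∈ Γ) :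
    (Γ : Set E) = (fun v => v + x) '' (Γ.direction : Set E) := by
  ext z
  constructor
  · intro hz
    refine ⟨z - x, ?_, by simp⟩
    have := AffineSubspace.vsub_mem_direction hz hx
    simpa [vsub_eq_sub] using this
  · rintro ⟨v, hv, rfl⟩
    have := AffineSubspace.vadd_mem_of_mem_direction hv hx
    simpa [vadd_eq_add] using this

lemma infDist_affine {Γ : AffineSubspace ℝ E} {x : E} (hx : x ∈ Γ) (u : E) :
    Metric.infDist (u + x) (Γ : Set E) = Metric.infDist u (Γ.direction : Set E) := by
  rw [coe_affine_eq Γ hx, infDist_add_right]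

lemma norm_sub_proj (W : Submodule ℝ E) (u : E) :
    ‖u - (Submodule.orthogonalProjectionOnto W u : E)‖ = Metric.infDist u (W : Set E) := by
  refine le_antisymm ?_ ?_
  · refine le_infDist' ⟨0, W.zero_mem⟩ fun w hw => ?_
    rw [dist_eq_norm, ← Submodule.starProjection_apply, Submodule.starProjection_minimal]
    exact ciInf_le ⟨0, by rintro z ⟨a, rfl⟩; positivity⟩ (⟨w, hw⟩ : W)
  · have := Metric.infDist_le_dist_of_mem (x := u) (Submodule.orthogonalProjectionOnto W u).2
    rwa [dist_eq_norm] at this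

set_option maxHeartbeats 1000000 in
lemma plane_approx {V W : Submodule ℝ E} (hrk : Module.finrank ℝ V = Module.finrank ℝ W)
    {η : ℝ} (hη0 : 0 ≤ η) (hη1 : η < 1)
    (h : ∀ v ∈ V, Metric.infDist v (W : Set E) ≤ η * ‖v‖) :
    ∀ w ∈ W, ∃ v ∈ V, ‖w - v‖ ≤ η / (1 - η) * ‖w‖ := by
  intro w hw
  set P := Submodule.orthogonalProjectionOnto W with hP
  let L : V →ₗ[ℝ] W := P.toLinearMap.comp V.subtype
  have hLv : ∀ v : V, ((L v : W) : E) = (P (v : E) : E) := fun v => rfl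
  have key : ∀ v : V, ‖(v : E) - (P (v : E) : E)‖ ≤ η * ‖(v : E)‖ := fun v => by
    rw [norm_sub_proj]; exact h v v.2
  have hinj : Function.Injective L := by
    rw [← LinearMap.ker_eq_bot]
    refine (Submodule.eq_bot_iff _).mpr fun v hv => ?_
    rw [LinearMap.mem_ker] at hv
    have hPv : ((P (v : E) : E)) = 0 := by
      rw [← hLv v, hv]; rfl
    have h1 := key v
    rw [hPv, sub_zero] at h1
    have h2 : (v : E) = 0 := by
      have := norm_nonneg (v : E)
      have : ‖(v : E)‖ = 0 := by nlinarith
      simpa [norm_eq_zero] using this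
    exact Subtype.ext h2
  have hsurj : Function.Surjective L :=
    (LinearMap.injective_iff_surjective_of_finrank_eq_finrank hrk).mp hinj
  obtain ⟨v, hv⟩ := hsurj ⟨w, hw⟩
  have hPvw : ((P (v : E) : E)) = w := by
    rw [← hLv v, hv]
  have h1 : ‖(v : E) - w‖ ≤ η * ‖(v : E)‖ := by
    have := key v; rwa [hPvw] at this
  have h2 : ‖(v : E)‖ ≤ ‖w‖ + η * ‖(v : E)‖ := by
    calc ‖(v : E)‖ = ‖w + ((v : E) - w)‖ := by rw [add_sub_cancel]
      _ ≤ ‖w‖ + ‖(v : E) - w‖ := norm_add_le _ _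
      _ ≤ ‖w‖ + η * ‖(v : E)‖ := by linarith
  have h3 : ‖(v : E)‖ ≤ ‖w‖ / (1 - η) := by
    rw [le_div_iff₀ (by linarith)]
    nlinarith
  refine ⟨v, v.2, ?_⟩
  calc ‖w - (v : E)‖ = ‖(v : E) - w‖ := norm_sub_rev _ _
    _ ≤ η * ‖(v : E)‖ := h1
    _ ≤ η * (‖w‖ / (1 - η)) := mul_le_mul_of_nonneg_left h3 hη0
    _ = η / (1 - η) * ‖w‖ := by ring

lemma span_finrank {n : ℕ} {f : Fin n → E} (hf : Orthonormal ℝ f) :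
    Module.finrank ℝ (Submodule.span ℝ (Set.range f)) = n := by
  rw [finrank_span_eq_card hf.linearIndependent, Fintype.card_fin]

lemma infDist_span_le {n : ℕ} {f g : Fin n → E} (hg : Orthonormal ℝ g)
    {u : E} {r : ℝ} (hu : ‖u‖ ≤ r) :
    Metric.infDist u ↑(Submodule.span ℝ (Set.range f)) ≤
      Metric.infDist u ↑(Submodule.span ℝ (Set.range g)) + 2 * r * (∑ i, ‖f i - g i‖) := by
  set G := Submodule.span ℝ (Set.range g) with hGdef
  set F := Submodule.span ℝ (Set.range f) with hFdef
  set Sg : ℝ := ∑ i, ‖f i - g i‖ with hSg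
  have hSg0 : 0 ≤ Sg := Finset.sum_nonneg fun i _ => norm_nonneg _
  have hr0 : 0 ≤ r := le_trans (norm_nonneg u) hu
  refine le_of_forall_pos_le_add fun ε hε => ?_
  set ε' := ε / (1 + Sg) with hε'def
  have hε' : 0 < ε' := div_pos hε (by linarith)
  have hGne : (G : Set E).Nonempty := ⟨0, G.zero_mem⟩
  have hIG : Metric.infDist u (G : Set E) ≤ r := by
    have h0 := Metric.infDist_le_dist_of_mem (x := u) G.zero_mem
    rw [dist_zero_right] at h0
    linarith
  obtain ⟨w, hwG, hdw⟩ := (Metric.infDist_lt_iff hGne).mp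
    (lt_add_of_pos_right (Metric.infDist u (G : Set E)) hε')
  have hwnorm : ‖w‖ ≤ 2 * r + ε' := by
    have h1 : ‖w‖ ≤ ‖u‖ + ‖u - w‖ := by
      calc ‖w‖ = ‖u - (u - w)‖ := by rw [sub_sub_cancel]
        _ ≤ ‖u‖ + ‖u - w‖ := norm_sub_le _ _
    have h2 : ‖u - w‖ = dist u w := (dist_eq_norm u w).symm
    linarith [hdw, hIG]
  obtain ⟨c, hc⟩ := (Submodule.mem_span_range_iff_exists_fun ℝ).mp hwG
  have hci : ∀ i, |c i| ≤ ‖w‖ := by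
    intro i
    have h1 : (inner ℝ (g i) w : ℝ) = c i := by
      rw [← hc]; exact hg.inner_right_fintype c i
    calc |c i| = |(inner ℝ (g i) w : ℝ)| := by rw [h1]
      _ ≤ ‖g i‖ * ‖w‖ := abs_real_inner_le_norm _ _
      _ = ‖w‖ := by rw [hg.1 i, one_mul]
  set w' : E := ∑ i, c i • f i with hw'def
  have hw'F : w' ∈ F := Submodule.sum_mem _ fun i _ =>
    Submodule.smul_mem _ _ (Submodule.subset_span ⟨i, rfl⟩)
  have hww' : ‖w - w'‖ ≤ (2 * r + ε') * Sg := by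
    have h1 : w - w' = ∑ i, c i • (g i - f i) := by
      rw [← hc, hw'def, ← Finset.sum_sub_distrib]
      congr 1; ext i; rw [smul_sub]
    calc ‖w - w'‖ = ‖∑ i, c i • (g i - f i)‖ := by rw [h1]
      _ ≤ ∑ i, ‖c i • (g i - f i)‖ := norm_sum_le _ _
      _ ≤ ∑ i, (2 * r + ε') * ‖f i - g i‖ := by
          refine Finset.sum_le_sum fun i _ => ?_
          rw [norm_smul, Real.norm_eq_abs, ← norm_sub_rev (f i)]
          exact mul_le_mul_of_nonneg_right (le_trans (hci i) hwnorm) (norm_nonneg _)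
      _ = (2 * r + ε') * Sg := by rw [← Finset.mul_sum]
  have hfinal : Metric.infDist u (F : Set E) ≤ dist u w + ‖w - w'‖ := by
    calc Metric.infDist u (F : Set E) ≤ dist u w' := Metric.infDist_le_dist_of_mem hw'F
      _ ≤ dist u w + dist w w' := dist_triangle _ _ _
      _ = dist u w + ‖w - w'‖ := by rw [dist_eq_norm w w']
  have hε'S : ε' * (1 + Sg) = ε := by
    rw [hε'def]; field_simp
  calc Metric.infDist u (F : Set E) ≤ dist u w + ‖w - w'‖ := hfinal
    _ ≤ (Metric.infDist u (G : Set E) + ε') + ((2 * r + ε') * Sg) := by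
        refine add_le_add hdw.le hww'
    _ ≤ Metric.infDist u (G : Set E) + 2 * r * Sg + ε := by nlinarith
lemma exists_frame {n : ℕ} (Γ : AffineSubspace ℝ E)
    (hrk : Module.finrank ℝ Γ.direction = n) :
    ∃ f : Fin n → E, Orthonormal ℝ f ∧ Submodule.span ℝ (Set.range f) = Γ.direction := by
  let b := (stdOrthonormalBasis ℝ Γ.direction).reindex (finCongr hrk)
  refine ⟨(Γ.direction.subtypeₗᵢ : Γ.direction →ₗᵢ[ℝ] E) ∘ b, b.orthonormal.comp_linearIsometry _, ?_⟩
  rw [Set.range_comp]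
  have h1 : (Γ.direction.subtypeₗᵢ : Γ.direction →ₗᵢ[ℝ] E) '' Set.range b
      = Γ.direction.subtype '' Set.range b := rfl
  have h2 : Submodule.span ℝ (Set.range ⇑b) = ⊤ := by
    rw [← b.coe_toBasis]; exact b.toBasis.span_eq
  rw [h1, ← Submodule.map_span, h2, Submodule.map_top, Submodule.range_subtype]

lemma frames_compact (n : ℕ) : IsCompact {f : Fin n → E | Orthonormal ℝ f} := by
  classical
  rw [Metric.isCompact_iff_isClosed_bounded]
  constructor
  · have heq : {f : Fin n → E | Orthonormal ℝ f}
        = ⋂ (i : Fin n), ⋂ (j : Fin n),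
          {f : Fin n → E | (inner ℝ (f i) (f j) : ℝ) = if i = j then 1 else 0} := by
      ext f
      simp only [Set.mem_setOf_eq, Set.mem_iInter, orthonormal_iff_ite]
    rw [heq]
    exact isClosed_iInter fun i => isClosed_iInter fun j =>
      isClosed_eq (Continuous.inner (continuous_apply i) (continuous_apply j)) continuous_const
  · refine Bornology.IsBounded.subset (Metric.isBounded_closedBall (x := (0 : Fin n → E)) (r := 1))
      fun f hf => ?_
    rw [Metric.mem_closedBall, dist_zero_right]
    refine (pi_norm_le_iff_of_nonneg zero_le_one).mpr fun i => ?_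
    rw [hf.1 i]

lemma frames_nonempty {n : ℕ} (hnd : n ≤ d) :
    Set.Nonempty {f : Fin n → E | Orthonormal ℝ f} := by
  refine ⟨(fun i : Fin d => (EuclideanSpace.basisFun (Fin d) ℝ) i) ∘ Fin.castLE hnd, ?_⟩
  exact (EuclideanSpace.basisFun (Fin d) ℝ).orthonormal.comp _ (Fin.castLE_injective hnd)

lemma planeSup_bddAbove {S : Set E} {Γ : AffineSubspace ℝ E} {x : E} {r : ℝ}
    (hxΓ : x ∈ Γ) :
    BddAbove ((fun y => Metric.infDist y (Γ : Set E)) '' (S ∩ Metric.ball x r)) := by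
  refine ⟨r, ?_⟩
  rintro t ⟨y, ⟨hyS, hyb⟩, rfl⟩
  exact le_trans (Metric.infDist_le_dist_of_mem hxΓ) (Metric.mem_ball.mp hyb).le

lemma planeSup_nonneg {S : Set E} {Γ : AffineSubspace ℝ E} {x : E} {r : ℝ}
    (hr : 0 < r) (hxS : x ∈ S) (hxΓ : x ∈ Γ) : 0 ≤ planeSup S Γ x r := by
  refine mul_nonneg (inv_nonneg.mpr hr.le) ?_
  refine le_trans Metric.infDist_nonneg
    (le_csSup (planeSup_bddAbove hxΓ) ⟨x, ⟨hxS, Metric.mem_ball_self hr⟩, rfl⟩)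

lemma infDist_mk' {n : ℕ} (f : Fin n → E) {x : E} (y : E) :
    Metric.infDist y ((AffineSubspace.mk' x (Submodule.span ℝ (Set.range f)) : AffineSubspace ℝ E) : Set E)
      = Metric.infDist (y - x) ((Submodule.span ℝ (Set.range f) : Submodule ℝ E) : Set E) := by
  conv_lhs => rw [show y = (y - x) + x by abel]
  rw [infDist_affine (AffineSubspace.self_mem_mk' x _), AffineSubspace.direction_mk']

lemma planeSup_frame_le {n : ℕ} {f g : Fin n → E} (hg : Orthonormal ℝ g)
    (S : Set E) {x : E} {r : ℝ} (hr : 0 < r) (hxS : x ∈ S) :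
    planeSup S (AffineSubspace.mk' x (Submodule.span ℝ (Set.range f))) x r ≤
      planeSup S (AffineSubspace.mk' x (Submodule.span ℝ (Set.range g))) x r
      + 2 * ∑ i, ‖f i - g i‖ := by
  set Sg : ℝ := ∑ i, ‖f i - g i‖ with hSgdef
  have hSg0 : 0 ≤ Sg := Finset.sum_nonneg fun i _ => norm_nonneg _
  have hA : (S ∩ Metric.ball x r).Nonempty := ⟨x, hxS, Metric.mem_ball_self hr⟩
  have hxf : x ∈ AffineSubspace.mk' x (Submodule.span ℝ (Set.range f)) :=
    AffineSubspace.self_mem_mk' x _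
  have hxg : x ∈ AffineSubspace.mk' x (Submodule.span ℝ (Set.range g)) :=
    AffineSubspace.self_mem_mk' x _
  have key : sSup ((fun y => Metric.infDist y
        ((AffineSubspace.mk' x (Submodule.span ℝ (Set.range f)) : AffineSubspace ℝ E) : Set E)) ''
        (S ∩ Metric.ball x r))
      ≤ sSup ((fun y => Metric.infDist y
        ((AffineSubspace.mk' x (Submodule.span ℝ (Set.range g)) : AffineSubspace ℝ E) : Set E)) ''
        (S ∩ Metric.ball x r)) + 2 * r * Sg := by
    refine csSup_le (hA.image _) ?_
    rintro t ⟨y, hy, rfl⟩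
    have hyr : ‖y - x‖ ≤ r := by
      have := Metric.mem_ball.mp hy.2
      rw [dist_eq_norm] at this; exact this.le
    calc Metric.infDist y ((AffineSubspace.mk' x (Submodule.span ℝ (Set.range f)) : AffineSubspace ℝ E) : Set E)
        = Metric.infDist (y - x) ((Submodule.span ℝ (Set.range f) : Submodule ℝ E) : Set E) :=
          infDist_mk' f y
      _ ≤ Metric.infDist (y - x) ((Submodule.span ℝ (Set.range g) : Submodule ℝ E) : Set E)
            + 2 * r * Sg := infDist_span_le hg hyr
      _ = Metric.infDist y ((AffineSubspace.mk' x (Submodule.span ℝ (Set.range g)) : AffineSubspace ℝ E) : Set E)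
            + 2 * r * Sg := by rw [infDist_mk' g y]
      _ ≤ _ := by
          refine add_le_add_left (le_csSup (planeSup_bddAbove hxg) ⟨y, hy, rfl⟩) _
  unfold planeSup
  have h2 : r⁻¹ * (2 * r * Sg) = 2 * Sg := by field_simp
  calc r⁻¹ * sSup _ ≤ r⁻¹ * (sSup ((fun y => Metric.infDist y
        ((AffineSubspace.mk' x (Submodule.span ℝ (Set.range g)) : AffineSubspace ℝ E) : Set E)) ''
        (S ∩ Metric.ball x r)) + 2 * r * Sg) :=
        mul_le_mul_of_nonneg_left key (inv_nonneg.mpr hr.le)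
    _ = _ := by rw [mul_add, h2]
set_option maxHeartbeats 1000000 in
lemma hd_bound {n : ℕ} {S : Set E} {x : E} {r a : ℝ} (hr : 0 < r) (hxS : x ∈ S)
    {Γβ Γα : AffineSubspace ℝ E} (hxβ : x ∈ Γβ) (hxα : x ∈ Γα)
    (hrkβ : Module.finrank ℝ Γβ.direction = n) (hrkα : Module.finrank ℝ Γα.direction = n)
    (ha : 0 < a) (har : a ≤ r / 50)
    (hHDα : Metric.hausdorffDist (S ∩ Metric.ball x r) ((Γα : Set E) ∩ Metric.ball x r) ≤ a)
    (hyβ : ∀ y ∈ S ∩ Metric.ball x r, Metric.infDist y (Γβ : Set E) ≤ a) :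
    Metric.hausdorffDist (S ∩ Metric.ball x r) ((Γβ : Set E) ∩ Metric.ball x r) ≤ 18 * a := by
  set A := S ∩ Metric.ball x r with hAdef
  have hA : A.Nonempty := ⟨x, hxS, Metric.mem_ball_self hr⟩
  have hΓαB : ((Γα : Set E) ∩ Metric.ball x r).Nonempty := ⟨x, hxα, Metric.mem_ball_self hr⟩
  have hAb : Bornology.IsBounded A :=
    (Metric.isBounded_ball (x := x) (r := r)).subset inter_subset_right
  have hΓαBb : Bornology.IsBounded ((Γα : Set E) ∩ Metric.ball x r) :=
    (Metric.isBounded_ball (x := x) (r := r)).subset inter_subset_right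
  have hedist : EMetric.hausdorffEdist A ((Γα : Set E) ∩ Metric.ball x r) ≠ ⊤ :=
    Metric.hausdorffEdist_ne_top_of_nonempty_of_bounded hA hΓαB hAb hΓαBb
  have hra : 0 < r - a := by linarith
  -- membership helper for points of Γα near the ball
  have hmemA : ∀ v' ∈ Γα.direction, ‖v'‖ < r →
      Metric.infDist (v' + x) A ≤ a := by
    intro v' hv' hv'r
    have hmem : v' + x ∈ (Γα : Set E) ∩ Metric.ball x r := by
      constructor
      · have := AffineSubspace.vadd_mem_of_mem_direction hv' hxα
        simpa [vadd_eq_add] using this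
      · rw [Metric.mem_ball, dist_eq_norm, add_sub_cancel_right]; exact hv'r
    have hfin' : EMetric.hausdorffEdist ((Γα : Set E) ∩ Metric.ball x r) A ≠ ⊤ := by
      rw [EMetric.hausdorffEdist, Metric.hausdorffEDist_comm]; exact hedist
    have h1 := Metric.infDist_le_hausdorffDist_of_mem hmem hfin'
    rw [Metric.hausdorffDist_comm] at h1
    linarith
  set η := 4 * a / r with hηdef
  have hη0 : 0 ≤ η := by positivity
  have hη12 : η ≤ 2 / 25 := by
    rw [hηdef, div_le_iff₀ hr]; linarith
  have hη1 : η < 1 := by linarith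
  -- hypothesis of plane_approx
  have hVW : ∀ v ∈ Γα.direction, Metric.infDist (v : E) (Γβ.direction : Set E) ≤ η * ‖v‖ := by
    intro v hv
    rcases eq_or_ne v 0 with rfl | hv0
    · simp only [norm_zero, mul_zero]
      have := Metric.infDist_le_dist_of_mem (x := (0 : E)) Γβ.direction.zero_mem
      simpa using this
    have hvn : 0 < ‖v‖ := norm_pos_iff.mpr hv0
    set c := r / (2 * ‖v‖) with hcdef
    have hc : 0 < c := by positivity
    set v₁ := c • v with hv₁def
    have hv₁V : v₁ ∈ Γα.direction := Submodule.smul_mem _ c hv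
    have hv₁n : ‖v₁‖ = r / 2 := by
      rw [hv₁def, norm_smul, Real.norm_eq_abs, abs_of_pos hc, hcdef]
      field_simp
    have h1 : Metric.infDist (v₁ + x) A ≤ a := hmemA v₁ hv₁V (by rw [hv₁n]; linarith)
    have h2 : Metric.infDist (v₁ + x) (Γβ : Set E) ≤ 2 * a := by
      refine le_of_forall_pos_le_add fun ε' hε' => ?_
      obtain ⟨y, hyA, hdy⟩ := (Metric.infDist_lt_iff hA).mp
        (lt_of_le_of_lt h1 (by linarith : a < a + ε'))
      have h3 := Metric.infDist_le_infDist_add_dist (x := v₁ + x) (y := y) (s := (Γβ : Set E))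
      have h4 := hyβ y hyA
      linarith
    have h3 : Metric.infDist v₁ (Γβ.direction : Set E) ≤ 2 * a := by
      rw [← infDist_affine hxβ v₁]; exact h2
    have h4 : v = c⁻¹ • v₁ := by rw [hv₁def, inv_smul_smul₀ hc.ne']
    have h5 : Metric.infDist (v : E) (Γβ.direction : Set E)
        = c⁻¹ * Metric.infDist v₁ (Γβ.direction : Set E) := by
      conv_lhs => rw [h4]
      exact infDist_smul _ (inv_pos.mpr hc) _
    have hcinv : c⁻¹ = 2 * ‖v‖ / r := by
      rw [hcdef]; field_simp
    have h6 : c⁻¹ * (2 * a) = η * ‖v‖ := by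
      rw [hcinv, hηdef]; field_simp; ring
    rw [h5, ← h6]
    exact mul_le_mul_of_nonneg_left h3 (by positivity)
  have hrk : Module.finrank ℝ Γα.direction = Module.finrank ℝ Γβ.direction :=
    hrkα.trans hrkβ.symm
  have hWV := plane_approx hrk hη0 hη1 hVW
  -- direction 1 : points of A are close to Γβ ∩ ball
  have dir1 : ∀ y ∈ A, Metric.infDist y ((Γβ : Set E) ∩ Metric.ball x r) ≤ 18 * a := by
    intro y hy
    set u := y - x with hudef
    set p := ((Submodule.orthogonalProjectionOnto Γβ.direction u : E) + x : E) with hpdef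
    have hpβ : p ∈ Γβ := by
      have := AffineSubspace.vadd_mem_of_mem_direction
        (Submodule.orthogonalProjectionOnto Γβ.direction u).2 hxβ
      simpa [hpdef, vadd_eq_add] using this
    have hdyp : dist y p ≤ a := by
      have h0 : dist y p = ‖u - (Submodule.orthogonalProjectionOnto Γβ.direction u : E)‖ := by
        rw [dist_eq_norm, hpdef, hudef]; congr 1; abel
      have h5 : Metric.infDist u (Γβ.direction : Set E) = Metric.infDist y (Γβ : Set E) := by
        rw [← infDist_affine hxβ u, hudef, sub_add_cancel]
      rw [h0, norm_sub_proj, h5]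
      exact hyβ y hy
    by_cases hpr : ‖p - x‖ < r
    · have hmem : p ∈ (Γβ : Set E) ∩ Metric.ball x r :=
        ⟨hpβ, by rw [Metric.mem_ball, dist_eq_norm]; exact hpr⟩
      exact le_trans (Metric.infDist_le_dist_of_mem hmem) (by linarith)
    · push_neg at hpr
      have hp0 : 0 < ‖p - x‖ := lt_of_lt_of_le hr hpr
      set c' := (r - a) / ‖p - x‖ with hc'def
      have hc'0 : 0 < c' := by positivity
      have hc'1 : c' ≤ 1 := by
        rw [hc'def, div_le_one hp0]; linarith
      set q := c' • (p - x) + x with hqdef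
      have hqβ : q ∈ Γβ := by
        have hpx : p - x ∈ Γβ.direction := by
          have := AffineSubspace.vsub_mem_direction hpβ hxβ
          simpa [vsub_eq_sub] using this
        have := AffineSubspace.vadd_mem_of_mem_direction
          (Submodule.smul_mem _ c' hpx) hxβ
        simpa [hqdef, vadd_eq_add] using this
      have hqn : ‖q - x‖ = r - a := by
        rw [hqdef, add_sub_cancel_right, norm_smul, Real.norm_eq_abs, abs_of_pos hc'0,
          hc'def, div_mul_cancel₀ _ hp0.ne']
      have hqb : q ∈ Metric.ball x r := by
        rw [Metric.mem_ball, dist_eq_norm, hqn]; linarith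
      have hpxle : ‖p - x‖ ≤ r + a := by
        have h1 : ‖p - x‖ ≤ ‖p - y‖ + ‖y - x‖ := norm_sub_le_norm_sub_add_norm_sub p y x
        have h2 : ‖p - y‖ = dist y p := by rw [dist_eq_norm, norm_sub_rev]
        have h3 : ‖y - x‖ < r := by
          have := Metric.mem_ball.mp hy.2; rwa [dist_eq_norm] at this
        linarith
      have hpq : dist p q ≤ 2 * a := by
        have h1 : p - q = (1 - c') • (p - x) := by
          rw [hqdef, sub_smul, one_smul]; abel
        have h2 : dist p q = (1 - c') * ‖p - x‖ := by
          rw [dist_eq_norm, h1, norm_smul, Real.norm_eq_abs, abs_of_nonneg (by linarith)]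
        have h3 : c' * ‖p - x‖ = r - a := by
          rw [hc'def, div_mul_cancel₀ _ hp0.ne']
        have : (1 - c') * ‖p - x‖ = ‖p - x‖ - (r - a) := by rw [sub_mul, one_mul, h3]
        rw [h2, this]; linarith
      have hmem : q ∈ (Γβ : Set E) ∩ Metric.ball x r := ⟨hqβ, hqb⟩
      calc Metric.infDist y ((Γβ : Set E) ∩ Metric.ball x r) ≤ dist y q :=
            Metric.infDist_le_dist_of_mem hmem
        _ ≤ dist y p + dist p q := dist_triangle _ _ _
        _ ≤ 18 * a := by linarith
  -- direction 2 : points of Γβ ∩ ball are close to A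
  have dir2 : ∀ z ∈ (Γβ : Set E) ∩ Metric.ball x r, Metric.infDist z A ≤ 18 * a := by
    rintro z ⟨hzβ, hzb⟩
    set w := z - x with hwdef
    have hwW : w ∈ Γβ.direction := by
      have := AffineSubspace.vsub_mem_direction hzβ hxβ
      simpa [vsub_eq_sub] using this
    have hwr : ‖w‖ < r := by
      have := Metric.mem_ball.mp hzb; rwa [dist_eq_norm] at this
    obtain ⟨v, hvV, hwv⟩ := hWV w hwW
    have hfrac : η / (1 - η) ≤ 2 * η := by
      rw [div_le_iff₀ (by linarith)]; nlinarith
    have hwv8 : ‖w - v‖ ≤ 8 * a := by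
      have h1 : η / (1 - η) * ‖w‖ ≤ 2 * η * ‖w‖ :=
        mul_le_mul_of_nonneg_right hfrac (norm_nonneg _)
      have h2 : 2 * η * ‖w‖ ≤ 2 * η * r :=
        mul_le_mul_of_nonneg_left hwr.le (by positivity)
      have h3 : 2 * η * r = 8 * a := by
        rw [hηdef]; field_simp; ring
      linarith
    have hvn : ‖v‖ ≤ r + 8 * a := by
      have h1 : ‖v‖ ≤ ‖w‖ + ‖w - v‖ := by
        calc ‖v‖ = ‖w - (w - v)‖ := by rw [sub_sub_cancel]
          _ ≤ ‖w‖ + ‖w - v‖ := norm_sub_le _ _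
      linarith
    obtain ⟨v', hv'V, hv'r, hvv'⟩ :
        ∃ v' ∈ Γα.direction, ‖v'‖ < r ∧ ‖v - v'‖ ≤ 9 * a := by
      by_cases hvr : ‖v‖ < r
      · exact ⟨v, hvV, hvr, by rw [sub_self, norm_zero]; positivity⟩
      · push_neg at hvr
        have hv0 : 0 < ‖v‖ := lt_of_lt_of_le hr hvr
        set c'' := (r - a) / ‖v‖ with hc''def
        refine ⟨c'' • v, Submodule.smul_mem _ _ hvV, ?_, ?_⟩
        · rw [norm_smul, Real.norm_eq_abs, abs_of_pos (by positivity),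
            hc''def, div_mul_cancel₀ _ hv0.ne']
          linarith
        · have h1 : v - c'' • v = (1 - c'') • v := by
            rw [sub_smul, one_smul]
          have hc''1 : c'' ≤ 1 := by
            rw [hc''def, div_le_one hv0]; linarith
          have h3 : c'' * ‖v‖ = r - a := by
            rw [hc''def, div_mul_cancel₀ _ hv0.ne']
          have h2 : ‖v - c'' • v‖ = ‖v‖ - (r - a) := by
            rw [h1, norm_smul, Real.norm_eq_abs, abs_of_nonneg (by linarith),
              sub_mul, one_mul, h3]
          rw [h2]; linarith
    have hzv' : dist z (v' + x) ≤ 17 * a := by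
      have h1 : z - (v' + x) = w - v' := by rw [hwdef]; abel
      have h2 : ‖w - v'‖ ≤ ‖w - v‖ + ‖v - v'‖ := norm_sub_le_norm_sub_add_norm_sub w v v'
      rw [dist_eq_norm, h1]; linarith
    have hv'A : Metric.infDist (v' + x) A ≤ a := hmemA v' hv'V hv'r
    have h3 := Metric.infDist_le_infDist_add_dist (x := z) (y := v' + x) (s := A)
    linarith
  exact Metric.hausdorffDist_le_of_infDist (by positivity) dir1 dir2
end Stmt10Aux


set_option maxHeartbeats 1000000 in
theorem stmt10 (n : ℕ) :
    ∃ C : ℝ, 1 ≤ C ∧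
      ∀ (d : ℕ) (S : Set (EuclideanSpace ℝ (Fin d))) (x : EuclideanSpace ℝ (Fin d)) (r : ℝ),
        n < d → x ∈ S → 0 < r → alphaNum n S x r ≤ 1 / 100 →
        ∃ Γ : AffineSubspace ℝ (EuclideanSpace ℝ (Fin d)),
          x ∈ Γ ∧ Module.finrank ℝ Γ.direction = n ∧
            planeSup S Γ x r = betaNum n S x r ∧
            planeHD S Γ x r ≤ C * alphaNum n S x r := by
  refine ⟨100, by norm_num, ?_⟩
  intro d S x r hnd hxS hr hα
  classical
  set K := {f : Fin n → EuclideanSpace ℝ (Fin d) | Orthonormal ℝ f} with hKdef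
  set F : (Fin n → EuclideanSpace ℝ (Fin d)) → ℝ :=
    fun f => planeSup S (AffineSubspace.mk' x (Submodule.span ℝ (Set.range f))) x r with hFdef
  have hKc := Stmt10Aux.frames_compact (d := d) n
  have hKne := Stmt10Aux.frames_nonempty (d := d) hnd.le
  have hFcont : ContinuousOn F K := by
    refine LipschitzOnWith.continuousOn (K := ⟨2 * n, by positivity⟩) ?_
    refine LipschitzOnWith.of_dist_le_mul fun f hf g hg => ?_
    have hsum : ∀ u v : Fin n → EuclideanSpace ℝ (Fin d),
        (∑ i, ‖u i - v i‖) ≤ n * dist u v := by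
      intro u v
      calc (∑ i, ‖u i - v i‖) = ∑ i, dist (u i) (v i) := by
            simp [dist_eq_norm]
        _ ≤ ∑ _i : Fin n, dist u v :=
            Finset.sum_le_sum fun i _ => dist_le_pi_dist u v i
        _ = n * dist u v := by
            rw [Finset.sum_const, Finset.card_univ, Fintype.card_fin, nsmul_eq_mul]
    have h1 : F f ≤ F g + 2 * ∑ i, ‖f i - g i‖ := Stmt10Aux.planeSup_frame_le hg S hr hxS
    have h2 : F g ≤ F f + 2 * ∑ i, ‖g i - f i‖ := Stmt10Aux.planeSup_frame_le hf S hr hxS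
    show |F f - F g| ≤ 2 * (n : ℝ) * dist f g
    rw [abs_sub_le_iff]
    have h3 := hsum f g
    have h4 := hsum g f
    rw [dist_comm g f] at h4
    constructor <;> linarith
  obtain ⟨f₀, hf₀K, hf₀min'⟩ := hKc.exists_isMinOn hKne hFcont
  have hf₀min : ∀ f ∈ K, F f₀ ≤ F f := fun f hf => (isMinOn_iff.mp hf₀min') f hf
  set Γβ := AffineSubspace.mk' x (Submodule.span ℝ (Set.range f₀)) with hΓβ
  have hxβ : x ∈ Γβ := AffineSubspace.self_mem_mk' x _
  have hrkβ : Module.finrank ℝ Γβ.direction = n := by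
    rw [hΓβ, AffineSubspace.direction_mk']; exact Stmt10Aux.span_finrank hf₀K
  have hTβ : {t : ℝ | ∃ Γ : AffineSubspace ℝ (EuclideanSpace ℝ (Fin d)),
      x ∈ Γ ∧ Module.finrank ℝ Γ.direction = n ∧ t = planeSup S Γ x r} = F '' K := by
    ext t
    constructor
    · rintro ⟨Γ, hxΓ, hrk, rfl⟩
      obtain ⟨f, hfon, hfspan⟩ := Stmt10Aux.exists_frame Γ hrk
      refine ⟨f, hfon, ?_⟩
      show planeSup S (AffineSubspace.mk' x (Submodule.span ℝ (Set.range f))) x r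
        = planeSup S Γ x r
      rw [hfspan, AffineSubspace.mk'_eq hxΓ]
    · rintro ⟨f, hf, rfl⟩
      exact ⟨AffineSubspace.mk' x (Submodule.span ℝ (Set.range f)),
        AffineSubspace.self_mem_mk' x _,
        by rw [AffineSubspace.direction_mk']; exact Stmt10Aux.span_finrank hf, rfl⟩
  have hbeta : betaNum n S x r = F f₀ := by
    unfold betaNum
    rw [hTβ]
    refine le_antisymm (csInf_le ⟨0, ?_⟩ ⟨f₀, hf₀K, rfl⟩) (le_csInf (hKne.image F) ?_)
    · rintro t ⟨f, hf, rfl⟩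
      exact Stmt10Aux.planeSup_nonneg hr hxS (AffineSubspace.self_mem_mk' x _)
    · rintro t ⟨f, hf, rfl⟩
      exact hf₀min f hf
  have hrealize : planeSup S Γβ x r = betaNum n S x r := by rw [hbeta]
  have hAsetne : Set.Nonempty {t : ℝ | ∃ Γ : AffineSubspace ℝ (EuclideanSpace ℝ (Fin d)),
      x ∈ Γ ∧ Module.finrank ℝ Γ.direction = n ∧ t = planeHD S Γ x r} :=
    ⟨planeHD S Γβ x r, Γβ, hxβ, hrkβ, rfl⟩
  have hα0 : 0 ≤ alphaNum n S x r := by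
    unfold alphaNum
    refine le_csInf hAsetne ?_
    rintro t ⟨Γ, hxΓ, _, rfl⟩
    exact mul_nonneg (inv_nonneg.mpr hr.le) Metric.hausdorffDist_nonneg
  have hbound : ∀ ε : ℝ, 0 < ε → ε ≤ 1 / 100 →
      planeHD S Γβ x r ≤ 18 * (alphaNum n S x r + ε) := by
    intro ε hε hε100
    have hlt : alphaNum n S x r < alphaNum n S x r + ε := by linarith
    obtain ⟨t, ⟨Γα, hxα, hrkα, rfl⟩, ht⟩ :=
      exists_lt_of_csInf_lt hAsetne (show sInf _ < alphaNum n S x r + ε from hlt)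
    set a := (alphaNum n S x r + ε) * r with hadef
    have ha : 0 < a := mul_pos (by linarith) hr
    have har : a ≤ r / 50 := by
      rw [hadef]
      nlinarith
    have hHDα : Metric.hausdorffDist (S ∩ Metric.ball x r)
        ((Γα : Set (EuclideanSpace ℝ (Fin d))) ∩ Metric.ball x r) ≤ a := by
      have h1 : planeHD S Γα x r ≤ alphaNum n S x r + ε := ht.le
      unfold planeHD at h1
      have h2 := mul_le_mul_of_nonneg_left h1 hr.le
      rw [← mul_assoc, mul_inv_cancel₀ hr.ne', one_mul] at h2
      rw [hadef]; linarith
    have hedist : EMetric.hausdorffEdist (S ∩ Metric.ball x r)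
        ((Γα : Set (EuclideanSpace ℝ (Fin d))) ∩ Metric.ball x r) ≠ ⊤ :=
      Metric.hausdorffEdist_ne_top_of_nonempty_of_bounded
        ⟨x, hxS, Metric.mem_ball_self hr⟩ ⟨x, hxα, Metric.mem_ball_self hr⟩
        ((Metric.isBounded_ball (x := x) (r := r)).subset inter_subset_right)
        ((Metric.isBounded_ball (x := x) (r := r)).subset inter_subset_right)
    have hyβ : ∀ y ∈ S ∩ Metric.ball x r,
        Metric.infDist y (Γβ : Set (EuclideanSpace ℝ (Fin d))) ≤ a := by
      intro y hy
      have h1 : Metric.infDist y (Γβ : Set (EuclideanSpace ℝ (Fin d)))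
          ≤ sSup ((fun y => Metric.infDist y (Γβ : Set (EuclideanSpace ℝ (Fin d)))) ''
            (S ∩ Metric.ball x r)) :=
        le_csSup (Stmt10Aux.planeSup_bddAbove hxβ) ⟨y, hy, rfl⟩
      have h3 : betaNum n S x r ≤ planeSup S Γα x r := by
        unfold betaNum
        refine csInf_le ⟨0, ?_⟩ ⟨Γα, hxα, hrkα, rfl⟩
        rintro t ⟨Γ, hxΓ, _, rfl⟩
        exact Stmt10Aux.planeSup_nonneg hr hxS hxΓ
      have h4 : planeSup S Γα x r ≤ planeHD S Γα x r := by
        unfold planeSup planeHD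
        refine mul_le_mul_of_nonneg_left ?_ (inv_nonneg.mpr hr.le)
        refine csSup_le (Set.Nonempty.image _ ⟨x, hxS, Metric.mem_ball_self hr⟩) ?_
        rintro t ⟨y', hy', rfl⟩
        have h5 : Metric.infDist y' (Γα : Set (EuclideanSpace ℝ (Fin d)))
            ≤ Metric.infDist y' ((Γα : Set (EuclideanSpace ℝ (Fin d))) ∩ Metric.ball x r) :=
          Metric.infDist_le_infDist_of_subset inter_subset_left
            ⟨x, hxα, Metric.mem_ball_self hr⟩
        have h6 := Metric.infDist_le_hausdorffDist_of_mem hy' hedist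
        linarith
      have h2 : planeSup S Γβ x r ≤ alphaNum n S x r + ε := by
        rw [hrealize]; linarith
      have h7 : planeSup S Γβ x r = r⁻¹ * sSup ((fun y => Metric.infDist y
          (Γβ : Set (EuclideanSpace ℝ (Fin d)))) '' (S ∩ Metric.ball x r)) := rfl
      rw [h7] at h2
      have h8 := mul_le_mul_of_nonneg_left h2 hr.le
      rw [← mul_assoc, mul_inv_cancel₀ hr.ne', one_mul] at h8
      rw [hadef]; linarith
    have hmain := Stmt10Aux.hd_bound hr hxS hxβ hxα hrkβ hrkα ha har hHDα hyβ
    have h8 : r⁻¹ * (18 * a) = 18 * (alphaNum n S x r + ε) := by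
      rw [hadef]; field_simp
    unfold planeHD
    calc r⁻¹ * Metric.hausdorffDist (S ∩ Metric.ball x r)
          ((Γβ : Set (EuclideanSpace ℝ (Fin d))) ∩ Metric.ball x r)
        ≤ r⁻¹ * (18 * a) := mul_le_mul_of_nonneg_left hmain (inv_nonneg.mpr hr.le)
      _ = 18 * (alphaNum n S x r + ε) := h8
  have hfin : planeHD S Γβ x r ≤ 18 * alphaNum n S x r := by
    refine le_of_forall_pos_le_add fun δ hδ => ?_
    have h1 := hbound (min (1 / 100) (δ / 18)) (lt_min (by norm_num) (by positivity))
      (min_le_left _ _)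
    have h2 : (18 : ℝ) * min (1 / 100) (δ / 18) ≤ δ := by
      have := min_le_right (1 / 100 : ℝ) (δ / 18)
      linarith
    linarith
  exact ⟨Γβ, hxβ, hrkβ, hrealize, by linarith⟩


end
end

section
/- For every n ∈ ℕ there exist constants α₀ = α₀(n) > 0 and C = C(n) > 0 such that the following holds. Let S ⊂ ℝ^d with d > n, let r > 0 and x ∈ S be such that α(x,r) ≤ α₀ and α(x,2r) ≤ α₀. Then for any choice of realizing planes Γ_x^r and Γ_x^{2r} one has d(Γ_x^r, Γ_x^{2r}) ≤ C·(β(x,r) + β(x,2r)). -/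
open Metric Set

noncomputable section

lemma proj_min {d : ℕ} (W : Submodule ℝ (EuclideanSpace ℝ (Fin d)))
    (z w : EuclideanSpace ℝ (Fin d)) (hw : w ∈ W) :
    ‖z - (Submodule.orthogonalProjectionOnto W z : EuclideanSpace ℝ (Fin d))‖ ≤ ‖z - w‖ := by
  rw [← Submodule.starProjection_apply, Submodule.starProjection_minimal]
  exact ciInf_le ⟨0, Set.forall_mem_range.2 fun _ => norm_nonneg _⟩ (⟨w, hw⟩ : W)

lemma proj_contract {d : ℕ} (W : Submodule ℝ (EuclideanSpace ℝ (Fin d)))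
    (z : EuclideanSpace ℝ (Fin d)) :
    ‖(Submodule.orthogonalProjectionOnto W z : EuclideanSpace ℝ (Fin d))‖ ≤ ‖z‖ := by
  have h1 : ‖(Submodule.orthogonalProjectionOnto W z : EuclideanSpace ℝ (Fin d))‖
      = ‖Submodule.orthogonalProjectionOnto W z‖ := rfl
  rw [h1]
  calc ‖Submodule.orthogonalProjectionOnto W z‖ ≤ ‖Submodule.orthogonalProjectionOnto W‖ * ‖z‖ :=
        (Submodule.orthogonalProjectionOnto W).le_opNorm z
    _ ≤ 1 * ‖z‖ := by
        have := Submodule.orthogonalProjectionOnto_norm_le W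
        nlinarith [norm_nonneg z]
    _ = ‖z‖ := one_mul _

lemma proj_smul {d : ℕ} (W : Submodule ℝ (EuclideanSpace ℝ (Fin d)))
    (c : ℝ) (z : EuclideanSpace ℝ (Fin d)) :
    (Submodule.orthogonalProjectionOnto W (c • z) : EuclideanSpace ℝ (Fin d))
      = c • (Submodule.orthogonalProjectionOnto W z : EuclideanSpace ℝ (Fin d)) := by
  rw [map_smul]; rfl

set_option maxHeartbeats 1600000 in
lemma key_lemma {d n : ℕ} (C' : ℝ) (hC' : 1 ≤ C')
    (S : Set (EuclideanSpace ℝ (Fin d))) (x : EuclideanSpace ℝ (Fin d)) (r : ℝ)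
    (hxS : x ∈ S) (hr : 0 < r)
    (hα₁ : alphaNum n S x r ≤ 1 / (40 * C'))
    (hα₂ : alphaNum n S x (2 * r) ≤ 1 / (40 * C'))
    (Γ₁ Γ₂ : AffineSubspace ℝ (EuclideanSpace ℝ (Fin d)))
    (h1 : IsRealizingPlane n C' S Γ₁ x r) (h2 : IsRealizingPlane n C' S Γ₂ x (2 * r)) :
    planeDist Γ₁ Γ₂ ≤ 10 * (betaNum n S x r + betaNum n S x (2 * r)) := by
  obtain ⟨hxΓ₁, hdim₁, hsup₁, hhd₁⟩ := h1
  obtain ⟨hxΓ₂, hdim₂, hsup₂, hhd₂⟩ := h2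
  have hC'0 : (0:ℝ) < C' := lt_of_lt_of_le one_pos hC'
  have hr2 : (0:ℝ) < 2 * r := by linarith
  set β₁ := betaNum n S x r with hβ₁def
  set β₂ := betaNum n S x (2 * r) with hβ₂def
  set V := Γ₁.direction with hV
  set W := Γ₂.direction with hW
  -- basic membership and boundedness facts
  have hxSB1 : x ∈ S ∩ ball x r := ⟨hxS, mem_ball_self hr⟩
  have hxG1 : x ∈ (Γ₁ : Set (EuclideanSpace ℝ (Fin d))) ∩ ball x r := ⟨hxΓ₁, mem_ball_self hr⟩
  have hxSB2 : x ∈ S ∩ ball x (2*r) := ⟨hxS, mem_ball_self hr2⟩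
  have hxG2 : x ∈ (Γ₂ : Set (EuclideanSpace ℝ (Fin d))) ∩ ball x (2*r) := ⟨hxΓ₂, mem_ball_self hr2⟩
  have hbSB1 : Bornology.IsBounded (S ∩ ball x r) := isBounded_ball.subset inter_subset_right
  have hbG1 : Bornology.IsBounded ((Γ₁ : Set (EuclideanSpace ℝ (Fin d))) ∩ ball x r) :=
    isBounded_ball.subset inter_subset_right
  have hbSB2 : Bornology.IsBounded (S ∩ ball x (2*r)) := isBounded_ball.subset inter_subset_right
  have hbG2 : Bornology.IsBounded ((Γ₂ : Set (EuclideanSpace ℝ (Fin d))) ∩ ball x (2*r)) :=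
    isBounded_ball.subset inter_subset_right
  have hfin1 : EMetric.hausdorffEdist (S ∩ ball x r)
      ((Γ₁ : Set (EuclideanSpace ℝ (Fin d))) ∩ ball x r) ≠ ⊤ :=
    hausdorffEdist_ne_top_of_nonempty_of_bounded ⟨x, hxSB1⟩ ⟨x, hxG1⟩ hbSB1 hbG1
  have hfin2 : EMetric.hausdorffEdist (S ∩ ball x (2*r))
      ((Γ₂ : Set (EuclideanSpace ℝ (Fin d))) ∩ ball x (2*r)) ≠ ⊤ :=
    hausdorffEdist_ne_top_of_nonempty_of_bounded ⟨x, hxSB2⟩ ⟨x, hxG2⟩ hbSB2 hbG2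
  -- Hausdorff distance bounds from the alpha hypotheses
  have hCinv : C' * (1 / (40 * C')) = 1/40 := by field_simp
  have hH1 : hausdorffDist (S ∩ ball x r)
      ((Γ₁ : Set (EuclideanSpace ℝ (Fin d))) ∩ ball x r) ≤ r/40 := by
    have h := hhd₁.trans (mul_le_mul_of_nonneg_left hα₁ hC'0.le)
    rw [hCinv] at h
    unfold planeHD at h
    have h' := mul_le_mul_of_nonneg_left h hr.le
    rw [← mul_assoc, mul_inv_cancel₀ hr.ne', one_mul] at h'
    linarith
  have hH2 : hausdorffDist (S ∩ ball x (2*r))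
      ((Γ₂ : Set (EuclideanSpace ℝ (Fin d))) ∩ ball x (2*r)) ≤ (2*r)/40 := by
    have h := hhd₂.trans (mul_le_mul_of_nonneg_left hα₂ hC'0.le)
    rw [hCinv] at h
    unfold planeHD at h
    have h' := mul_le_mul_of_nonneg_left h hr2.le
    rw [← mul_assoc, mul_inv_cancel₀ hr2.ne', one_mul] at h'
    linarith
  -- beta facts
  have hbdd1 : BddAbove ((fun y => infDist y (Γ₁ : Set (EuclideanSpace ℝ (Fin d)))) ''
      (S ∩ ball x r)) := by
    refine ⟨r, ?_⟩
    rintro t ⟨y, hy, rfl⟩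
    exact (infDist_le_dist_of_mem hxΓ₁).trans (mem_ball.mp hy.2).le
  have hbdd2 : BddAbove ((fun y => infDist y (Γ₂ : Set (EuclideanSpace ℝ (Fin d)))) ''
      (S ∩ ball x (2*r))) := by
    refine ⟨2*r, ?_⟩
    rintro t ⟨y, hy, rfl⟩
    exact (infDist_le_dist_of_mem hxΓ₂).trans (mem_ball.mp hy.2).le
  have hsSup1 : sSup ((fun y => infDist y (Γ₁ : Set (EuclideanSpace ℝ (Fin d)))) ''
      (S ∩ ball x r)) = r * β₁ := by
    have h := hsup₁
    unfold planeSup at h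
    rw [← h, ← mul_assoc, mul_inv_cancel₀ hr.ne', one_mul]
  have hsSup2 : sSup ((fun y => infDist y (Γ₂ : Set (EuclideanSpace ℝ (Fin d)))) ''
      (S ∩ ball x (2*r))) = (2*r) * β₂ := by
    have h := hsup₂
    unfold planeSup at h
    rw [← h, ← mul_assoc, mul_inv_cancel₀ hr2.ne', one_mul]
  have hinf1 : ∀ s ∈ S ∩ ball x r, infDist s (Γ₁ : Set (EuclideanSpace ℝ (Fin d))) ≤ r * β₁ := by
    intro s hs
    rw [← hsSup1]
    exact le_csSup hbdd1 ⟨s, hs, rfl⟩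
  have hinf2 : ∀ s ∈ S ∩ ball x (2*r),
      infDist s (Γ₂ : Set (EuclideanSpace ℝ (Fin d))) ≤ (2*r) * β₂ := by
    intro s hs
    rw [← hsSup2]
    exact le_csSup hbdd2 ⟨s, hs, rfl⟩
  have hβ₁0 : 0 ≤ β₁ := by
    have h0 : (0:ℝ) ≤ r * β₁ := le_trans infDist_nonneg (hinf1 x hxSB1)
    nlinarith
  have hβ₂0 : 0 ≤ β₂ := by
    have h0 : (0:ℝ) ≤ (2*r) * β₂ := le_trans infDist_nonneg (hinf2 x hxSB2)
    nlinarith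
  have hβ₁le : β₁ ≤ 1/40 := by
    have hle : sSup ((fun y => infDist y (Γ₁ : Set (EuclideanSpace ℝ (Fin d)))) ''
        (S ∩ ball x r)) ≤ hausdorffDist (S ∩ ball x r)
        ((Γ₁ : Set (EuclideanSpace ℝ (Fin d))) ∩ ball x r) := by
      apply csSup_le (Set.Nonempty.image _ ⟨x, hxSB1⟩)
      rintro t ⟨y, hy, rfl⟩
      calc infDist y (Γ₁ : Set (EuclideanSpace ℝ (Fin d)))
          ≤ infDist y ((Γ₁ : Set (EuclideanSpace ℝ (Fin d))) ∩ ball x r) :=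
            infDist_le_infDist_of_subset inter_subset_left ⟨x, hxG1⟩
        _ ≤ _ := infDist_le_hausdorffDist_of_mem hy hfin1
    rw [hsSup1] at hle
    nlinarith [hle.trans hH1]
  have hβ₂le : β₂ ≤ 1/40 := by
    have hle : sSup ((fun y => infDist y (Γ₂ : Set (EuclideanSpace ℝ (Fin d)))) ''
        (S ∩ ball x (2*r))) ≤ hausdorffDist (S ∩ ball x (2*r))
        ((Γ₂ : Set (EuclideanSpace ℝ (Fin d))) ∩ ball x (2*r)) := by
      apply csSup_le (Set.Nonempty.image _ ⟨x, hxSB2⟩)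
      rintro t ⟨y, hy, rfl⟩
      calc infDist y (Γ₂ : Set (EuclideanSpace ℝ (Fin d)))
          ≤ infDist y ((Γ₂ : Set (EuclideanSpace ℝ (Fin d))) ∩ ball x (2*r)) :=
            infDist_le_infDist_of_subset inter_subset_left ⟨x, hxG2⟩
        _ ≤ _ := infDist_le_hausdorffDist_of_mem hy hfin2
    rw [hsSup2] at hle
    nlinarith [hle.trans hH2]
  -- main estimate, up to ε
  refine le_of_forall_pos_le_add fun ε hε => ?_
  set η := min (ε/10) (1/100) with hηdef
  have hη0 : 0 < η := lt_min (by linarith) (by norm_num)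
  have hη1 : η ≤ 1/100 := min_le_right _ _
  have hηε : 10 * η ≤ ε := by
    have := min_le_left (ε/10) (1/100)
    simp only [← hηdef] at this
    linarith
  set τ := β₁ + 2*β₂ + 2*η with hτdef
  have hτ0 : 0 < τ := by simp only [hτdef]; linarith
  have hτle : τ ≤ (1:ℝ)/10 := by simp only [hτdef]; linarith
  -- projections
  set Q : EuclideanSpace ℝ (Fin d) → EuclideanSpace ℝ (Fin d) :=
    fun z => ((Submodule.orthogonalProjectionOnto W z : W) : EuclideanSpace ℝ (Fin d)) with hQdef
  set g : EuclideanSpace ℝ (Fin d) → ℝ := fun z => ‖z - Q z‖ with hgdef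
  have gmin : ∀ z w, w ∈ W → g z ≤ ‖z - w‖ := fun z w hw => proj_min W z w hw
  have gQmem : ∀ z, Q z ∈ W := fun z => SetLike.coe_mem _
  have ghom : ∀ (c : ℝ) z, g (c • z) = |c| * g z := by
    intro c z
    simp only [hgdef, hQdef, proj_smul, ← smul_sub, norm_smul, Real.norm_eq_abs]
  have gsub : ∀ a b, g (a + b) ≤ g a + g b := by
    intro a b
    calc g (a + b) ≤ ‖(a + b) - (Q a + Q b)‖ := gmin _ _ (W.add_mem (gQmem a) (gQmem b))
      _ = ‖(a - Q a) + (b - Q b)‖ := by rw [add_sub_add_comm]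
      _ ≤ g a + g b := norm_add_le _ _
  have hg0 : g 0 = 0 := by simp [hgdef, hQdef]
  set K : Set (EuclideanSpace ℝ (Fin d)) :=
    (V : Set (EuclideanSpace ℝ (Fin d))) ∩ closedBall 0 1 with hKdef
  have h0K : (0 : EuclideanSpace ℝ (Fin d)) ∈ K :=
    ⟨V.zero_mem, mem_closedBall_self (by norm_num)⟩
  have hKbdd : BddAbove (g '' K) := by
    refine ⟨1, ?_⟩
    rintro t ⟨z, hz, rfl⟩
    calc g z ≤ ‖z - 0‖ := gmin z 0 W.zero_mem
      _ = ‖z‖ := by rw [sub_zero]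
      _ ≤ 1 := mem_closedBall_zero_iff.mp hz.2
  set M := sSup (g '' K) with hMdef
  have hM0 : 0 ≤ M := by
    have h := le_csSup hKbdd ⟨0, h0K, rfl⟩
    rwa [hg0] at h
  have hgM : ∀ v, v ∈ V → g v ≤ M * ‖v‖ := by
    intro v hv
    rcases eq_or_ne v 0 with h | h
    · rw [h, hg0, norm_zero, mul_zero]
    · have hvn : 0 < ‖v‖ := norm_pos_iff.mpr h
      have hu : ‖v‖⁻¹ • v ∈ K := by
        refine ⟨V.smul_mem _ hv, ?_⟩
        rw [mem_closedBall_zero_iff, norm_smul, Real.norm_eq_abs, abs_inv, abs_norm,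
          inv_mul_cancel₀ hvn.ne']
      have hgu : g (‖v‖⁻¹ • v) ≤ M := le_csSup hKbdd ⟨_, hu, rfl⟩
      have h2 := ghom ‖v‖⁻¹ v
      rw [abs_inv, abs_norm] at h2
      rw [h2] at hgu
      have h3 : g v = ‖v‖ * (‖v‖⁻¹ * g v) := by field_simp
      calc g v = ‖v‖ * (‖v‖⁻¹ * g v) := h3
        _ ≤ ‖v‖ * M := mul_le_mul_of_nonneg_left hgu hvn.le
        _ = M * ‖v‖ := mul_comm _ _
  -- the key unit-vector estimate
  have hunit : ∀ v, v ∈ V → ‖v‖ = 1 → g v ≤ 2*τ + M/5 := by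
    intro v hv hv1
    set y := (r/2) • v + x with hydef
    have hyΓ : y ∈ Γ₁ := by
      have h := AffineSubspace.vadd_mem_of_mem_direction (V.smul_mem (r/2) hv) hxΓ₁
      rwa [vadd_eq_add] at h
    have hyB : y ∈ ball x r := by
      rw [mem_ball, dist_eq_norm, hydef, add_sub_cancel_right, norm_smul, Real.norm_eq_abs,
        abs_of_pos (by linarith : (0:ℝ) < r/2), hv1, mul_one]
      linarith
    have hyG1 : y ∈ (Γ₁ : Set (EuclideanSpace ℝ (Fin d))) ∩ ball x r := ⟨hyΓ, hyB⟩
    have hηr : 0 < η * r := mul_pos hη0 hr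
    have hyS : infDist y (S ∩ ball x r) ≤ r/40 := by
      have hfin1' : Metric.hausdorffEDist ((Γ₁ : Set (EuclideanSpace ℝ (Fin d))) ∩ ball x r)
          (S ∩ ball x r) ≠ ⊤ := by
        rw [EMetric.hausdorffEdist_comm]; exact hfin1
      calc infDist y (S ∩ ball x r)
          ≤ hausdorffDist ((Γ₁ : Set (EuclideanSpace ℝ (Fin d))) ∩ ball x r) (S ∩ ball x r) :=
            infDist_le_hausdorffDist_of_mem hyG1 hfin1'
        _ = hausdorffDist (S ∩ ball x r) ((Γ₁ : Set (EuclideanSpace ℝ (Fin d))) ∩ ball x r) :=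
            hausdorffDist_comm ..
        _ ≤ r/40 := hH1
    obtain ⟨s, hsSB1, hys⟩ := (infDist_lt_iff ⟨x, hxSB1⟩).mp
      (lt_of_le_of_lt hyS (by linarith : r/40 < r/40 + η*r))
    obtain ⟨q, hqΓ, hsq⟩ := (infDist_lt_iff ⟨x, hxΓ₁⟩).mp
      (lt_of_le_of_lt (hinf1 s hsSB1) (by linarith : r * β₁ < r * β₁ + η*r))
    have hsSB2 : s ∈ S ∩ ball x (2*r) := by
      refine ⟨hsSB1.1, ?_⟩
      have h := mem_ball.mp hsSB1.2
      rw [mem_ball]; linarith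
    obtain ⟨p, hpΓ, hsp⟩ := (infDist_lt_iff ⟨x, hxΓ₂⟩).mp
      (lt_of_le_of_lt (hinf2 s hsSB2) (by linarith : (2*r) * β₂ < (2*r) * β₂ + η*r))
    set v' := q - x with hv'def
    have hv'V : v' ∈ V := by
      have h := AffineSubspace.vsub_mem_direction hqΓ hxΓ₁
      rwa [vsub_eq_sub] at h
    have hw'W : p - x ∈ W := by
      have h := AffineSubspace.vsub_mem_direction hpΓ hxΓ₂
      rwa [vsub_eq_sub] at h
    have est1 : g v' ≤ r * τ := by
      calc g v' ≤ ‖v' - (p - x)‖ := gmin _ _ hw'W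
        _ = ‖q - p‖ := by rw [hv'def, sub_sub_sub_cancel_right]
        _ = dist q p := (dist_eq_norm _ _).symm
        _ ≤ dist q s + dist s p := dist_triangle _ _ _
        _ ≤ (r * β₁ + η*r) + ((2*r) * β₂ + η*r) := by
            rw [dist_comm q s]; linarith [hsq.le, hsp.le]
        _ = r * τ := by simp only [hτdef]; ring
    have est2 : ‖(r/2) • v - v'‖ ≤ r/10 := by
      have he : (r/2) • v - v' = y - q := by rw [hydef, hv'def]; abel
      rw [he]
      calc ‖y - q‖ = dist y q := (dist_eq_norm _ _).symm
        _ ≤ dist y s + dist s q := dist_triangle _ _ _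
        _ ≤ (r/40 + η*r) + (r * β₁ + η*r) := by linarith [hys.le, hsq.le]
        _ ≤ r/10 := by nlinarith [mul_le_mul_of_nonneg_left hβ₁le hr.le,
            mul_le_mul_of_nonneg_left hη1 hr.le]
    set z := (r/2) • v - v' with hzdef
    have hzV : z ∈ V := V.sub_mem (V.smul_mem _ hv) hv'V
    have hgz : g z ≤ M * (r/10) := (hgM z hzV).trans (mul_le_mul_of_nonneg_left est2 hM0)
    have hsplit : g ((r/2) • v) ≤ g v' + g z := by
      have h : (r/2) • v = v' + z := by rw [hzdef]; abel
      rw [h]; exact gsub v' z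
    have hghalf : g ((r/2) • v) = (r/2) * g v := by
      rw [ghom, abs_of_pos (by linarith : (0:ℝ) < r/2)]
    have hc : (r/2) * g v ≤ r*τ + M*(r/10) := by
      rw [← hghalf]; exact le_trans hsplit (add_le_add est1 hgz)
    have hexp : (r/2) * (2*τ + M/5) = r*τ + M*(r/10) := by ring
    have h3 : (r/2) * g v ≤ (r/2) * (2*τ + M/5) := by rw [hexp]; exact hc
    exact le_of_mul_le_mul_left h3 (by linarith)
  -- bootstrap
  have hMle : M ≤ 2*τ + M/5 := by
    apply csSup_le (Set.Nonempty.image g ⟨0, h0K⟩)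
    rintro t ⟨z, hz, rfl⟩
    rcases eq_or_ne z 0 with h | h
    · rw [h, hg0]; linarith
    · have hzn : 0 < ‖z‖ := norm_pos_iff.mpr h
      have hz1 : ‖z‖ ≤ 1 := mem_closedBall_zero_iff.mp hz.2
      have hun : ‖(‖z‖⁻¹ • z)‖ = 1 := by
        rw [norm_smul, Real.norm_eq_abs, abs_inv, abs_norm, inv_mul_cancel₀ hzn.ne']
      have hgu := hunit (‖z‖⁻¹ • z) (V.smul_mem _ hz.1) hun
      have h2 := ghom ‖z‖⁻¹ z
      rw [abs_inv, abs_norm] at h2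
      rw [h2] at hgu
      have h3 : g z = ‖z‖ * (‖z‖⁻¹ * g z) := by field_simp
      calc g z = ‖z‖ * (‖z‖⁻¹ * g z) := h3
        _ ≤ 1 * (2*τ + M/5) := by
            apply mul_le_mul hz1 hgu _ (by norm_num)
            rw [← h2]
            exact norm_nonneg _
        _ = 2*τ + M/5 := one_mul _
  have hMτ : M ≤ (5/2) * τ := by linarith
  have hMhalf : M ≤ 1/4 := by linarith
  -- symmetric direction via projection surjectivity
  set Pm : EuclideanSpace ℝ (Fin d) → EuclideanSpace ℝ (Fin d) :=
    fun z => ((Submodule.orthogonalProjectionOnto V z : V) : EuclideanSpace ℝ (Fin d)) with hPdef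
  have hfr : Module.finrank ℝ V = Module.finrank ℝ W := by rw [hdim₁, hdim₂]
  set f : V →ₗ[ℝ] W := (Submodule.orthogonalProjectionOnto W).toLinearMap.comp V.subtype with hfdef
  have hinj : Function.Injective f := by
    apply (injective_iff_map_eq_zero f).mpr
    intro a ha
    simp only [hfdef, LinearMap.comp_apply, ContinuousLinearMap.coe_coe,
      Submodule.coe_subtype] at ha
    have hQa : Q (a : EuclideanSpace ℝ (Fin d)) = 0 := by
      rw [hQdef]; simp only [ha, ZeroMemClass.coe_zero]
    have hga : g (a : EuclideanSpace ℝ (Fin d)) = ‖(a : EuclideanSpace ℝ (Fin d))‖ := by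
      rw [hgdef]; simp only [hQa, sub_zero]
    have hle := hgM (a : EuclideanSpace ℝ (Fin d)) a.2
    rw [hga] at hle
    have hna : ‖(a : EuclideanSpace ℝ (Fin d))‖ = 0 := by nlinarith [norm_nonneg (a : EuclideanSpace ℝ (Fin d))]
    have : (a : EuclideanSpace ℝ (Fin d)) = 0 := norm_eq_zero.mp hna
    exact Subtype.ext this
  have hsurj : Function.Surjective f :=
    (LinearMap.injective_iff_surjective_of_finrank_eq_finrank hfr).mp hinj
  have hWclose : ∀ w, w ∈ W → ‖w - Pm w‖ ≤ 2*M*‖w‖ := by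
    intro w hw
    obtain ⟨a, ha⟩ := hsurj ⟨w, hw⟩
    have hQa : Q (a : EuclideanSpace ℝ (Fin d)) = w := by
      rw [hQdef]
      have := congrArg (fun t : W => (t : EuclideanSpace ℝ (Fin d))) ha
      simpa [hfdef] using this
    have hga : g (a : EuclideanSpace ℝ (Fin d)) ≤ M * ‖(a : EuclideanSpace ℝ (Fin d))‖ :=
      hgM _ a.2
    have hgaw : ‖(a : EuclideanSpace ℝ (Fin d)) - w‖ ≤ M * ‖(a : EuclideanSpace ℝ (Fin d))‖ := by
      rw [← hQa]; exact hga
    have hnorm : ‖(a : EuclideanSpace ℝ (Fin d))‖ ≤ 2 * ‖w‖ := by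
      have h1 : ‖(a : EuclideanSpace ℝ (Fin d))‖ ≤ ‖w‖ + ‖(a : EuclideanSpace ℝ (Fin d)) - w‖ := by
        calc ‖(a : EuclideanSpace ℝ (Fin d))‖ = ‖w + ((a : EuclideanSpace ℝ (Fin d)) - w)‖ := by
              rw [add_sub_cancel]
          _ ≤ _ := norm_add_le _ _
      nlinarith [norm_nonneg (a : EuclideanSpace ℝ (Fin d)), norm_nonneg w]
    calc ‖w - Pm w‖ ≤ ‖w - (a : EuclideanSpace ℝ (Fin d))‖ := proj_min V w _ a.2
      _ = ‖(a : EuclideanSpace ℝ (Fin d)) - w‖ := norm_sub_rev _ _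
      _ ≤ M * ‖(a : EuclideanSpace ℝ (Fin d))‖ := hgaw
      _ ≤ M * (2 * ‖w‖) := mul_le_mul_of_nonneg_left hnorm hM0
      _ = 2*M*‖w‖ := by ring
  -- assemble the Hausdorff bound
  have hPD : planeDist Γ₁ Γ₂ ≤ 2*M := by
    unfold planeDist
    rw [← hV, ← hW]
    apply hausdorffDist_le_of_mem_dist (by linarith)
    · rintro v ⟨hvV, hv1⟩
      refine ⟨Q v, ⟨gQmem v, ?_⟩, ?_⟩
      · rw [mem_closedBall_zero_iff]
        exact (proj_contract W v).trans (mem_closedBall_zero_iff.mp hv1)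
      · rw [dist_eq_norm]
        calc ‖v - Q v‖ ≤ M * ‖v‖ := hgM v hvV
          _ ≤ M * 1 := mul_le_mul_of_nonneg_left (mem_closedBall_zero_iff.mp hv1) hM0
          _ ≤ 2*M := by linarith
    · rintro w ⟨hwW, hw1⟩
      refine ⟨Pm w, ⟨SetLike.coe_mem _, ?_⟩, ?_⟩
      · rw [mem_closedBall_zero_iff]
        exact (proj_contract V w).trans (mem_closedBall_zero_iff.mp hw1)
      · rw [dist_eq_norm]
        calc ‖w - Pm w‖ ≤ 2*M*‖w‖ := hWclose w hwW
          _ ≤ 2*M*1 := by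
              apply mul_le_mul_of_nonneg_left (mem_closedBall_zero_iff.mp hw1) (by linarith)
          _ = 2*M := mul_one _
  calc planeDist Γ₁ Γ₂ ≤ 2*M := hPD
    _ ≤ 5*τ := by linarith
    _ = 5*β₁ + 10*β₂ + 10*η := by simp only [hτdef]; ring
    _ ≤ 10*(β₁ + β₂) + ε := by linarith

theorem stmt11 (n : ℕ) (C' : ℝ) (hC' : 1 ≤ C') :
    ∃ α₀ : ℝ, 0 < α₀ ∧ ∃ C : ℝ, 0 < C ∧
      ∀ (d : ℕ) (S : Set (EuclideanSpace ℝ (Fin d))) (x : EuclideanSpace ℝ (Fin d)) (r : ℝ),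
        n < d → x ∈ S → 0 < r →
        alphaNum n S x r ≤ α₀ → alphaNum n S x (2 * r) ≤ α₀ →
        ∀ Γ₁ Γ₂ : AffineSubspace ℝ (EuclideanSpace ℝ (Fin d)),
          IsRealizingPlane n C' S Γ₁ x r → IsRealizingPlane n C' S Γ₂ x (2 * r) →
          planeDist Γ₁ Γ₂ ≤ C * (betaNum n S x r + betaNum n S x (2 * r)) := by
  have hC'0 : (0:ℝ) < C' := lt_of_lt_of_le one_pos hC'
  refine ⟨1 / (40 * C'), by positivity, 10, by norm_num, ?_⟩
  intro d S x r hnd hxS hr hα₁ hα₂ Γ₁ Γ₂ h1 h2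
  exact key_lemma C' hC' S x r hxS hr hα₁ hα₂ Γ₁ Γ₂ h1 h2

end
end

section
/- For every n ∈ ℕ there exist constants α₀ = α₀(n) > 0 and C = C(n) > 0 such that the following holds. Let S ⊂ ℝ^d with d > n, let r > 0 and x, y ∈ S be such that α(x,r) ≤ α₀, α(y,r) ≤ α₀ and |x − y| < r/4. Then for any choice of realizing planes Γ_x^r and Γ_y^r one has d(Γ_x^r, Γ_y^r) ≤ C·(β(x,r) + β(y,r)). -/
open Metric Set

noncomputable section

set_option maxHeartbeats 1000000

open Finset in

lemma aux_sum_abs {n : ℕ} (c : Fin n → ℝ) :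
    ∑ i, |c i| ≤ Real.sqrt n * Real.sqrt (∑ i, (c i)^2) := by
  have h : (∑ i, |c i|)^2 ≤ n * ∑ i, (c i)^2 := by
    simpa [sq_abs] using sq_sum_le_card_mul_sum_sq (s := Finset.univ) (f := fun i => |c i|)
  have h0 : (0:ℝ) ≤ ∑ i, |c i| := Finset.sum_nonneg fun i _ => abs_nonneg _
  calc ∑ i, |c i| = Real.sqrt ((∑ i, |c i|)^2) := (Real.sqrt_sq h0).symm
    _ ≤ Real.sqrt (n * ∑ i, (c i)^2) := Real.sqrt_le_sqrt h
    _ = Real.sqrt n * Real.sqrt (∑ i, (c i)^2) := Real.sqrt_mul (Nat.cast_nonneg n) _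

lemma aux_on_norm {E : Type*} [NormedAddCommGroup E] [InnerProductSpace ℝ E] {n : ℕ}
    {u : Fin n → E} (hu : Orthonormal ℝ u) (c : Fin n → ℝ) :
    ‖∑ i, c i • u i‖ = Real.sqrt (∑ i, (c i)^2) := by
  have h := hu.inner_sum c c Finset.univ
  rw [@norm_eq_sqrt_re_inner ℝ, h]
  simp [sq]

lemma aux_sqrt_le {n : ℕ} : Real.sqrt n ≤ (n:ℝ) + 1 := by
  have : ((n:ℝ)) ≤ ((n:ℝ)+1)^2 := by nlinarith [Nat.cast_nonneg (α := ℝ) n]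
  calc Real.sqrt n ≤ Real.sqrt (((n:ℝ)+1)^2) := Real.sqrt_le_sqrt this
    _ = (n:ℝ)+1 := Real.sqrt_sq (by positivity)

/-- Perturbed orthonormal frame lower bound. -/
lemma aux_frame {E : Type*} [NormedAddCommGroup E] [InnerProductSpace ℝ E] {n : ℕ}
    {u h : Fin n → E} (hu : Orthonormal ℝ u) {θ : ℝ} (hθ0 : 0 ≤ θ)
    (hh : ∀ i, ‖h i‖ ≤ θ) (hθ : Real.sqrt n * θ ≤ 1/2) (c : Fin n → ℝ) :
    Real.sqrt (∑ i, (c i)^2) / 2 ≤ ‖∑ i, c i • (u i + h i)‖ := by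
  set m := Real.sqrt (∑ i, (c i)^2) with hm
  have hm0 : 0 ≤ m := Real.sqrt_nonneg _
  have h1 : ‖∑ i, c i • h i‖ ≤ θ * (Real.sqrt n * m) := by
    calc ‖∑ i, c i • h i‖ ≤ ∑ i, ‖c i • h i‖ := norm_sum_le _ _
      _ ≤ ∑ i, |c i| * θ := by
          refine Finset.sum_le_sum fun i _ => ?_
          rw [norm_smul, Real.norm_eq_abs]
          exact mul_le_mul_of_nonneg_left (hh i) (abs_nonneg _)
      _ = (∑ i, |c i|) * θ := by rw [Finset.sum_mul]
      _ ≤ (Real.sqrt n * m) * θ := mul_le_mul_of_nonneg_right (aux_sum_abs c) hθ0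
      _ = θ * (Real.sqrt n * m) := by ring
  have h2 : θ * (Real.sqrt n * m) ≤ m / 2 := by
    have := mul_le_mul_of_nonneg_right hθ hm0
    nlinarith [Real.sqrt_nonneg (n:ℝ)]
  have h3 : ‖∑ i, c i • u i‖ = m := aux_on_norm hu c
  have h4 : ∑ i, c i • (u i + h i) = (∑ i, c i • u i) + ∑ i, c i • h i := by
    rw [← Finset.sum_add_distrib]
    exact Finset.sum_congr rfl fun i _ => by rw [smul_add]
  calc m / 2 = m - m/2 := by ring
    _ ≤ ‖∑ i, c i • u i‖ - ‖∑ i, c i • h i‖ := by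
        rw [h3]; linarith [le_trans h1 h2]
    _ ≤ ‖(∑ i, c i • u i) + ∑ i, c i • h i‖ := by
        have := norm_add_le_of_le (le_refl ‖∑ i, c i • u i‖) (le_refl ‖∑ i, c i • h i‖)
        have h5 := norm_le_norm_add_norm_sub' (∑ i, c i • u i) (-(∑ i, c i • h i))
        -- use standard: ‖a‖ - ‖b‖ ≤ ‖a + b‖
        have := norm_sub_norm_le (∑ i, c i • u i) (-(∑ i, c i • h i))
        simpa [sub_neg_eq_add] using this
    _ = ‖∑ i, c i • (u i + h i)‖ := by rw [h4]

lemma one_sided {n d : ℕ} {S : Set (EuclideanSpace ℝ (Fin d))}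
    {x y : EuclideanSpace ℝ (Fin d)} {r bx bY : ℝ}
    (Γ₁ Γ₂ : AffineSubspace ℝ (EuclideanSpace ℝ (Fin d)))
    (hr : 0 < r) (hxS : x ∈ S) (hxy : ‖x - y‖ < r/4)
    (hx1 : x ∈ Γ₁) (hy2 : y ∈ Γ₂) (hrk : Module.finrank ℝ Γ₁.direction = n)
    (hH : hausdorffDist (S ∩ ball x r) ((Γ₁ : Set _) ∩ ball x r) ≤ (100*((n:ℝ)+1))⁻¹ * r)
    (hb1 : ∀ s ∈ S ∩ ball x r, infDist s (Γ₁ : Set _) ≤ bx * r)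
    (hb2 : ∀ s ∈ S ∩ ball y r, infDist s (Γ₂ : Set _) ≤ bY * r)
    (hbx : 0 ≤ bx) (hby : 0 ≤ bY) (hsmall : bx + bY ≤ (100*((n:ℝ)+1))⁻¹) :
    ∀ v ∈ (Γ₁.direction : Set (EuclideanSpace ℝ (Fin d))) ∩ closedBall 0 1,
      ∃ w ∈ (Γ₂.direction : Set (EuclideanSpace ℝ (Fin d))) ∩ closedBall 0 1,
        dist v w ≤ 16*((n:ℝ)+1) * (bx + bY) := by
  set ε : ℝ := (100*((n:ℝ)+1))⁻¹ with hεdef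
  have hn1 : (1:ℝ) ≤ (n:ℝ)+1 := by have := Nat.cast_nonneg (α := ℝ) n; linarith
  have hε0 : 0 < ε := by positivity
  have hε8 : ε ≤ 1/100 := by
    rw [hεdef]
    rw [inv_le_comm₀ (by positivity) (by norm_num)]
    nlinarith
  -- orthonormal basis of Γ₁.direction
  have : FiniteDimensional ℝ Γ₁.direction := inferInstance
  let b : OrthonormalBasis (Fin n) ℝ Γ₁.direction :=
    (stdOrthonormalBasis ℝ Γ₁.direction).reindex (finCongr hrk)
  let u : Fin n → EuclideanSpace ℝ (Fin d) := fun i => (b i : EuclideanSpace ℝ (Fin d))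
  have hu : Orthonormal ℝ u := b.orthonormal.comp_linearIsometry Γ₁.direction.subtypeₗᵢ
  have humem : ∀ i, u i ∈ Γ₁.direction := fun i => (b i).2
  have hunorm : ∀ i, ‖u i‖ = 1 := hu.1
  -- points q i on Γ₁
  set q : Fin n → EuclideanSpace ℝ (Fin d) := fun i => (r/4) • u i + x with hq
  have hqΓ : ∀ i, q i ∈ Γ₁ := fun i =>
    AffineSubspace.vadd_mem_of_mem_direction (Γ₁.direction.smul_mem (r/4) (humem i)) hx1
  have hqdist : ∀ i, dist (q i) x = r/4 := by
    intro i
    rw [dist_eq_norm]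
    simp only [hq, add_sub_cancel_right, norm_smul, hunorm i, Real.norm_eq_abs, mul_one]
    rw [abs_of_pos (by linarith)]
  have hqball : ∀ i, q i ∈ ball x r := fun i => by
    rw [mem_ball, hqdist i]; linarith
  -- nonemptiness/boundedness
  have hA : (S ∩ ball x r).Nonempty := ⟨x, hxS, mem_ball_self hr⟩
  have hG : ((Γ₁ : Set (EuclideanSpace ℝ (Fin d))) ∩ ball x r).Nonempty := ⟨x, hx1, mem_ball_self hr⟩
  have bA : Bornology.IsBounded (S ∩ ball x r) := isBounded_ball.subset inter_subset_right
  have bG : Bornology.IsBounded ((Γ₁ : Set (EuclideanSpace ℝ (Fin d))) ∩ ball x r) :=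
    isBounded_ball.subset inter_subset_right
  have hfin : EMetric.hausdorffEdist ((Γ₁ : Set (EuclideanSpace ℝ (Fin d))) ∩ ball x r) (S ∩ ball x r) ≠ ⊤ :=
    hausdorffEdist_ne_top_of_nonempty_of_bounded hG hA bG bA
  -- choose s i ∈ S near q i
  have hchoose : ∀ i, ∃ s ∈ S ∩ ball x r, dist (q i) s < 2*ε*r := by
    intro i
    rw [← infDist_lt_iff hA]
    calc infDist (q i) (S ∩ ball x r)
        ≤ hausdorffDist ((Γ₁ : Set (EuclideanSpace ℝ (Fin d))) ∩ ball x r) (S ∩ ball x r) :=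
          infDist_le_hausdorffDist_of_mem ⟨hqΓ i, hqball i⟩ hfin
      _ ≤ ε * r := by rw [hausdorffDist_comm]; exact hH
      _ < 2*ε*r := by nlinarith
  choose s hsmem hsd using hchoose
  have hsS : ∀ i, s i ∈ S := fun i => (hsmem i).1
  have hsball : ∀ i, s i ∈ ball x r := fun i => (hsmem i).2
  have hsbally : ∀ i, s i ∈ ball y r := by
    intro i
    rw [mem_ball, dist_eq_norm]
    have h1 : ‖s i - y‖ ≤ ‖s i - q i‖ + ‖q i - x‖ + ‖x - y‖ := by
      calc ‖s i - y‖ = ‖(s i - q i) + (q i - x) + (x - y)‖ := by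
            congr 1; abel
        _ ≤ ‖(s i - q i) + (q i - x)‖ + ‖x - y‖ := norm_add_le _ _
        _ ≤ ‖s i - q i‖ + ‖q i - x‖ + ‖x - y‖ := by
            linarith [norm_add_le (s i - q i) (q i - x)]
    have h2 : ‖s i - q i‖ < 2*ε*r := by
      rw [← dist_eq_norm, dist_comm]; exact hsd i
    have h3 : ‖q i - x‖ = r/4 := by rw [← dist_eq_norm]; exact hqdist i
    have : 2*ε*r ≤ r/2 := by nlinarith
    linarith
  have hxbally : x ∈ ball y r := by
    rw [mem_ball, dist_eq_norm]; linarith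
  -- closed subspaces and nearest points
  have hc1 : IsClosed (Γ₁ : Set (EuclideanSpace ℝ (Fin d))) := Γ₁.closed_of_finiteDimensional
  have hc2 : IsClosed (Γ₂ : Set (EuclideanSpace ℝ (Fin d))) := Γ₂.closed_of_finiteDimensional
  have ht1 : ∀ i, ∃ t ∈ (Γ₁ : Set (EuclideanSpace ℝ (Fin d))), dist (s i) t ≤ bx * r := by
    intro i
    obtain ⟨t, htm, htd⟩ := hc1.exists_infDist_eq_dist ⟨x, hx1⟩ (s i)
    exact ⟨t, htm, htd ▸ hb1 (s i) (hsmem i)⟩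
  have ht2 : ∀ i, ∃ t ∈ (Γ₂ : Set (EuclideanSpace ℝ (Fin d))), dist (s i) t ≤ bY * r := by
    intro i
    obtain ⟨t, htm, htd⟩ := hc2.exists_infDist_eq_dist ⟨y, hy2⟩ (s i)
    exact ⟨t, htm, htd ▸ hb2 (s i) ⟨hsS i, hsbally i⟩⟩
  obtain ⟨z0, hz0m, hz0d⟩ : ∃ t ∈ (Γ₂ : Set (EuclideanSpace ℝ (Fin d))), dist x t ≤ bY * r := by
    obtain ⟨t, htm, htd⟩ := hc2.exists_infDist_eq_dist ⟨y, hy2⟩ x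
    exact ⟨t, htm, htd ▸ hb2 x ⟨hxS, hxbally⟩⟩
  choose t1 ht1m ht1d using ht1
  choose t2 ht2m ht2d using ht2
  -- the vectors
  set w : Fin n → EuclideanSpace ℝ (Fin d) := fun i => s i - x with hwdef
  set w1 : Fin n → EuclideanSpace ℝ (Fin d) := fun i => t1 i - x with hw1def
  set w2 : Fin n → EuclideanSpace ℝ (Fin d) := fun i => t2 i - z0 with hw2def
  have hw1mem : ∀ i, w1 i ∈ Γ₁.direction := fun i =>
    AffineSubspace.vsub_mem_direction (ht1m i) hx1
  have hw2mem : ∀ i, w2 i ∈ Γ₂.direction := fun i =>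
    AffineSubspace.vsub_mem_direction (ht2m i) hz0m
  have e1 : ∀ i, ‖w1 i - w i‖ ≤ bx * r := by
    intro i
    simp only [hw1def, hwdef]
    have : t1 i - x - (s i - x) = t1 i - s i := by abel
    rw [this, ← dist_eq_norm, dist_comm]
    exact ht1d i
  have e12 : ∀ i, ‖w1 i - w2 i‖ ≤ 2*(bx + bY) * r := by
    intro i
    have : w1 i - w2 i = (w1 i - w i) + ((s i - t2 i) + (z0 - x)) := by
      simp only [hw1def, hwdef, hw2def]; abel
    rw [this]
    have h1 := norm_add_le (w1 i - w i) ((s i - t2 i) + (z0 - x))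
    have h2 := norm_add_le (s i - t2 i) (z0 - x)
    have h3 : ‖s i - t2 i‖ ≤ bY * r := by rw [← dist_eq_norm]; exact ht2d i
    have h4 : ‖z0 - x‖ ≤ bY * r := by rw [← dist_eq_norm, dist_comm]; exact hz0d
    have h5 := e1 i
    nlinarith
  -- frame decomposition of w1
  have hwq : ∀ i, ‖w i - (r/4) • u i‖ < 2*ε*r := by
    intro i
    have : w i - (r/4) • u i = s i - q i := by simp only [hwdef, hq]; abel
    rw [this, ← dist_eq_norm, dist_comm]
    exact hsd i
  set hvec : Fin n → EuclideanSpace ℝ (Fin d) := fun i => (4/r) • w1 i - u i with hhvec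
  have hr4 : (4/r) * (r/4) = 1 := by field_simp
  have hdecomp : ∀ i, u i + hvec i = (4/r) • w1 i := fun i => by
    simp only [hhvec]; abel
  have hw1eq : ∀ i, w1 i = (r/4) • ((4/r) • w1 i) := by
    intro i
    rw [smul_smul]
    have : (r/4) * (4/r) = 1 := by field_simp
    rw [this, one_smul]
  set θ : ℝ := 4*bx + 8*ε with hθdef
  have hθ0 : 0 ≤ θ := by positivity
  have hhnorm : ∀ i, ‖hvec i‖ ≤ θ := by
    intro i
    have h1 : hvec i = (4/r) • (w1 i - (r/4) • u i) := by
      simp only [hhvec, smul_sub, smul_smul, hr4, one_smul]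
    rw [h1, norm_smul, Real.norm_eq_abs, abs_of_pos (by positivity : (0:ℝ) < 4/r)]
    have h2 : ‖w1 i - (r/4) • u i‖ ≤ bx * r + 2*ε*r := by
      have := norm_add_le (w1 i - w i) (w i - (r/4) • u i)
      have h3 : w1 i - (r/4) • u i = (w1 i - w i) + (w i - (r/4) • u i) := by abel
      rw [h3]
      linarith [e1 i, le_of_lt (hwq i)]
    calc 4/r * ‖w1 i - (r/4) • u i‖ ≤ 4/r * (bx * r + 2*ε*r) :=
          mul_le_mul_of_nonneg_left h2 (by positivity)
      _ = θ := by rw [hθdef]; field_simp; ring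
  have hθsmall : Real.sqrt n * θ ≤ 1/2 := by
    have hsq : Real.sqrt n ≤ (n:ℝ)+1 := aux_sqrt_le
    have h1 : θ ≤ 12 * ε := by
      rw [hθdef]
      have : bx ≤ ε := le_trans (le_add_of_nonneg_right hby) hsmall
      linarith
    have h2 : ((n:ℝ)+1) * ε = 1/100 := by
      rw [hεdef]; field_simp
    calc Real.sqrt n * θ ≤ ((n:ℝ)+1) * (12*ε) := by
          apply mul_le_mul hsq h1 hθ0 (by positivity)
      _ = 12 * (((n:ℝ)+1) * ε) := by ring
      _ ≤ 1/2 := by rw [h2]; norm_num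
  -- lower bound for combinations of w1
  have hlow : ∀ c : Fin n → ℝ, (r/8) * Real.sqrt (∑ i, (c i)^2) ≤ ‖∑ i, c i • w1 i‖ := by
    intro c
    have h1 := aux_frame (E := EuclideanSpace ℝ (Fin d)) (h := hvec) hu hθ0 hhnorm hθsmall c
    have h2 : ∑ i, c i • (u i + hvec i) = (4/r) • ∑ i, c i • w1 i := by
      rw [Finset.smul_sum]
      refine Finset.sum_congr rfl fun i _ => ?_
      rw [hdecomp i, smul_comm]
    rw [h2, norm_smul, Real.norm_eq_abs, abs_of_pos (by positivity : (0:ℝ) < 4/r)] at h1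
    have h3 : (r/4) * (Real.sqrt (∑ i, (c i)^2) / 2) ≤ (r/4) * (4/r * ‖∑ i, c i • w1 i‖) :=
      mul_le_mul_of_nonneg_left h1 (by positivity)
    calc (r/8) * Real.sqrt (∑ i, (c i)^2) = (r/4) * (Real.sqrt (∑ i, (c i)^2) / 2) := by ring
      _ ≤ (r/4) * (4/r * ‖∑ i, c i • w1 i‖) := h3
      _ = ‖∑ i, c i • w1 i‖ := by field_simp
  -- linear independence and spanning
  have hli : LinearIndependent ℝ w1 := by
    rw [Fintype.linearIndependent_iff]
    intro c hc
    have h1 := hlow c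
    rw [hc, norm_zero] at h1
    have h2 : Real.sqrt (∑ i, (c i)^2) ≤ 0 := by
      have hr8 : 0 < r/8 := by linarith
      nlinarith [Real.sqrt_nonneg (∑ i, (c i)^2)]
    have h3 : (∑ i, (c i)^2) = 0 := by
      have h4 : Real.sqrt (∑ i, (c i)^2) = 0 :=
        le_antisymm h2 (Real.sqrt_nonneg _)
      have h5 : (0:ℝ) ≤ ∑ i, (c i)^2 := Finset.sum_nonneg fun i _ => sq_nonneg _
      nlinarith [Real.sq_sqrt h5]
    intro i
    have := Finset.sum_eq_zero_iff_of_nonneg (fun i _ => sq_nonneg (c i)) |>.mp h3 i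
      (Finset.mem_univ i)
    exact pow_eq_zero_iff (by norm_num) |>.mp this
  have hspan : Submodule.span ℝ (Set.range w1) = Γ₁.direction := by
    apply Submodule.eq_of_le_of_finrank_le
    · rw [Submodule.span_le]
      rintro _ ⟨i, rfl⟩
      exact hw1mem i
    · rw [hrk, finrank_span_eq_card hli, Fintype.card_fin]
  -- main estimate
  rintro v ⟨hv1, hvball⟩
  have hvnorm : ‖v‖ ≤ 1 := by
    rw [mem_closedBall, dist_zero_right] at hvball
    exact hvball
  have hvspan : v ∈ Submodule.span ℝ (Set.range w1) := hspan ▸ hv1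
  obtain ⟨c, hc⟩ := (Submodule.mem_span_range_iff_exists_fun ℝ).mp hvspan
  set m := Real.sqrt (∑ i, (c i)^2) with hmdef
  have hm0 : 0 ≤ m := Real.sqrt_nonneg _
  have hmle : m ≤ 8 / r := by
    have h1 := hlow c
    rw [hc] at h1
    have h2 : (r/8) * m ≤ 1 := le_trans h1 hvnorm
    rw [le_div_iff₀ hr]
    nlinarith
  set u' : EuclideanSpace ℝ (Fin d) := ∑ i, c i • w2 i with hu'def
  have hu'mem : u' ∈ Γ₂.direction :=
    Submodule.sum_mem _ fun i _ => Submodule.smul_mem _ _ (hw2mem i)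
  have hvu : ‖v - u'‖ ≤ 16*((n:ℝ)+1)*(bx+bY) := by
    have h1 : v - u' = ∑ i, c i • (w1 i - w2 i) := by
      rw [← hc, hu'def, ← Finset.sum_sub_distrib]
      exact Finset.sum_congr rfl fun i _ => (smul_sub _ _ _).symm
    rw [h1]
    calc ‖∑ i, c i • (w1 i - w2 i)‖ ≤ ∑ i, ‖c i • (w1 i - w2 i)‖ := norm_sum_le _ _
      _ ≤ ∑ i, |c i| * (2*(bx+bY)*r) := Finset.sum_le_sum fun i _ => by
            rw [norm_smul, Real.norm_eq_abs]
            exact mul_le_mul_of_nonneg_left (e12 i) (abs_nonneg _)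
      _ = (∑ i, |c i|) * (2*(bx+bY)*r) := by rw [Finset.sum_mul]
      _ ≤ (Real.sqrt n * m) * (2*(bx+bY)*r) :=
            mul_le_mul_of_nonneg_right (aux_sum_abs c) (by positivity)
      _ ≤ (((n:ℝ)+1) * (8/r)) * (2*(bx+bY)*r) := by
            apply mul_le_mul_of_nonneg_right _ (by positivity)
            exact mul_le_mul aux_sqrt_le hmle hm0 (by positivity)
      _ = 16*((n:ℝ)+1)*(bx+bY) * (r / r) := by ring
      _ = 16*((n:ℝ)+1)*(bx+bY) := by rw [div_self (ne_of_gt hr), mul_one]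
  set p : EuclideanSpace ℝ (Fin d) := (Submodule.orthogonalProjectionOnto Γ₂.direction v : EuclideanSpace ℝ (Fin d)) with hpdef
  have hpmem : p ∈ Γ₂.direction := (Submodule.orthogonalProjectionOnto Γ₂.direction v).2
  have hperp : v - p ∈ Γ₂.directionᗮ := Submodule.sub_starProjection_mem_orthogonal v
  have hinner : (inner ℝ p (v - p) : ℝ) = 0 :=
    Submodule.inner_right_of_mem_orthogonal hpmem hperp
  have hpnorm : ‖p‖ ≤ ‖v‖ := by
    have h1 : ‖v‖^2 = ‖p‖^2 + ‖v - p‖^2 := by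
      have h2 : v = p + (v - p) := by abel
      calc ‖v‖^2 = ‖p + (v-p)‖^2 := by rw [← h2]
        _ = ‖p‖^2 + 2*(inner ℝ p (v-p) : ℝ) + ‖v-p‖^2 := norm_add_sq_real _ _
        _ = ‖p‖^2 + ‖v-p‖^2 := by rw [hinner]; ring
    nlinarith [norm_nonneg p, norm_nonneg v, sq_nonneg ‖v-p‖]
  have hpbest : ‖v - p‖ ≤ ‖v - u'‖ := by
    rw [hpdef, ← Submodule.starProjection_apply, Submodule.starProjection_minimal]
    exact ciInf_le ⟨0, by rintro _ ⟨z, rfl⟩; exact norm_nonneg _⟩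
      (⟨u', hu'mem⟩ : Γ₂.direction)
  refine ⟨p, ⟨hpmem, ?_⟩, ?_⟩
  · rw [mem_closedBall, dist_zero_right]; exact le_trans hpnorm hvnorm
  · rw [dist_eq_norm]; exact le_trans hpbest hvu

-- facts from planeSup S Γ x r = β
lemma sup_facts {d n : ℕ} {S : Set (EuclideanSpace ℝ (Fin d))}
    {Γ : AffineSubspace ℝ (EuclideanSpace ℝ (Fin d))}
    {x : EuclideanSpace ℝ (Fin d)} {r β : ℝ}
    (hr : 0 < r) (hxS : x ∈ S) (hxΓ : x ∈ Γ)
    (hsup : planeSup S Γ x r = β) :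
    (∀ s ∈ S ∩ ball x r, infDist s (Γ : Set (EuclideanSpace ℝ (Fin d))) ≤ β * r) ∧ 0 ≤ β := by
  set img := (fun z => Metric.infDist z (Γ : Set (EuclideanSpace ℝ (Fin d)))) ''
    (S ∩ Metric.ball x r) with himg
  have hbdd : BddAbove img := by
    refine ⟨r, ?_⟩
    rintro _ ⟨z, ⟨hzS, hzb⟩, rfl⟩
    exact le_trans (infDist_le_dist_of_mem hxΓ) (le_of_lt (mem_ball.mp hzb))
  have hsSup : sSup img = β * r := by
    have h1 : r⁻¹ * sSup img = β := hsup
    have : sSup img = r * (r⁻¹ * sSup img) := by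
      field_simp
    rw [this, h1]; ring
  constructor
  · intro s hs
    calc infDist s (Γ : Set (EuclideanSpace ℝ (Fin d))) ≤ sSup img :=
          le_csSup hbdd ⟨s, hs, rfl⟩
      _ = β * r := hsSup
  · have h0 : (0:ℝ) ≤ sSup img := by
      refine le_trans infDist_nonneg (le_csSup hbdd ⟨x, ⟨hxS, mem_ball_self hr⟩, rfl⟩)
    rw [hsSup] at h0
    rw [mul_comm] at h0
    exact nonneg_of_mul_nonneg_right h0 hr

lemma hd_fact {d n : ℕ} {S : Set (EuclideanSpace ℝ (Fin d))}
    {Γ : AffineSubspace ℝ (EuclideanSpace ℝ (Fin d))}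
    {x : EuclideanSpace ℝ (Fin d)} {r C' : ℝ}
    (hr : 0 < r) (hC' : 1 ≤ C')
    (hα : alphaNum n S x r ≤ (100*((n:ℝ)+1)*C')⁻¹)
    (hhd : planeHD S Γ x r ≤ C' * alphaNum n S x r) :
    hausdorffDist (S ∩ ball x r) ((Γ : Set (EuclideanSpace ℝ (Fin d))) ∩ ball x r)
      ≤ (100*((n:ℝ)+1))⁻¹ * r := by
  have hC0 : (0:ℝ) < C' := lt_of_lt_of_le one_pos hC'
  have hn1 : (0:ℝ) < (n:ℝ)+1 := by positivity
  have h1 : planeHD S Γ x r ≤ C' * (100*((n:ℝ)+1)*C')⁻¹ :=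
    le_trans hhd (mul_le_mul_of_nonneg_left hα (le_of_lt hC0))
  have h2 : C' * (100*((n:ℝ)+1)*C')⁻¹ = (100*((n:ℝ)+1))⁻¹ := by
    field_simp
  rw [h2] at h1
  have h3 : r⁻¹ * hausdorffDist (S ∩ ball x r)
      ((Γ : Set (EuclideanSpace ℝ (Fin d))) ∩ ball x r) ≤ (100*((n:ℝ)+1))⁻¹ := h1
  calc hausdorffDist (S ∩ ball x r) ((Γ : Set (EuclideanSpace ℝ (Fin d))) ∩ ball x r)
      = r * (r⁻¹ * hausdorffDist (S ∩ ball x r)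
          ((Γ : Set (EuclideanSpace ℝ (Fin d))) ∩ ball x r)) := by
        field_simp
    _ ≤ r * (100*((n:ℝ)+1))⁻¹ := mul_le_mul_of_nonneg_left h3 (le_of_lt hr)
    _ = (100*((n:ℝ)+1))⁻¹ * r := by ring

theorem stmt12 (n : ℕ) (C' : ℝ) (hC' : 1 ≤ C') :
    ∃ α₀ : ℝ, 0 < α₀ ∧ ∃ C : ℝ, 0 < C ∧
      ∀ (d : ℕ) (S : Set (EuclideanSpace ℝ (Fin d)))
        (x y : EuclideanSpace ℝ (Fin d)) (r : ℝ),
        n < d → x ∈ S → y ∈ S → 0 < r →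
        alphaNum n S x r ≤ α₀ → alphaNum n S y r ≤ α₀ → ‖x - y‖ < r / 4 →
        ∀ Γ₁ Γ₂ : AffineSubspace ℝ (EuclideanSpace ℝ (Fin d)),
          IsRealizingPlane n C' S Γ₁ x r → IsRealizingPlane n C' S Γ₂ y r →
          planeDist Γ₁ Γ₂ ≤ C * (betaNum n S x r + betaNum n S y r) := by
  refine ⟨(100*((n:ℝ)+1)*C')⁻¹, by positivity, 100*((n:ℝ)+1), by positivity, ?_⟩
  intro d S x y r hnd hxS hyS hr hax hay hxy Γ₁ Γ₂ h1 h2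
  obtain ⟨hx1, hrk1, hsup1, hhd1⟩ := h1
  obtain ⟨hy2, hrk2, hsup2, hhd2⟩ := h2
  set bx := betaNum n S x r with hbx
  set bY := betaNum n S y r with hbY
  obtain ⟨hb1, hbx0⟩ := sup_facts (n := n) hr hxS hx1 hsup1
  obtain ⟨hb2, hbY0⟩ := sup_facts (n := n) hr hyS hy2 hsup2
  have hH1 := hd_fact hr hC' hax hhd1
  have hH2 := hd_fact hr hC' hay hhd2
  have hyx : ‖y - x‖ < r/4 := by rw [norm_sub_rev]; exact hxy
  by_cases hcase : bx + bY ≤ (100*((n:ℝ)+1))⁻¹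
  · have F := one_sided Γ₁ Γ₂ hr hxS hxy hx1 hy2 hrk1 hH1 hb1 hb2 hbx0 hbY0 hcase
    have B := one_sided Γ₂ Γ₁ hr hyS hyx hy2 hx1 hrk2 hH2 hb2 hb1 hbY0 hbx0
      (by linarith)
    unfold planeDist
    apply hausdorffDist_le_of_mem_dist
      (show (0:ℝ) ≤ 100*((n:ℝ)+1)*(bx+bY) by positivity)
    · intro v hv
      obtain ⟨w, hw, hd⟩ := F v hv
      refine ⟨w, hw, le_trans hd ?_⟩
      have : (0:ℝ) ≤ (n:ℝ)+1 := by positivity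
      nlinarith
    · intro v hv
      obtain ⟨w, hw, hd⟩ := B v hv
      refine ⟨w, hw, le_trans hd ?_⟩
      have : (0:ℝ) ≤ (n:ℝ)+1 := by positivity
      nlinarith
  · unfold planeDist
    have htriv : hausdorffDist
        ((Γ₁.direction : Set (EuclideanSpace ℝ (Fin d))) ∩ closedBall 0 1)
        ((Γ₂.direction : Set (EuclideanSpace ℝ (Fin d))) ∩ closedBall 0 1) ≤ 1 := by
      apply hausdorffDist_le_of_mem_dist zero_le_one
      · intro v hv
        refine ⟨0, ⟨Submodule.zero_mem _, mem_closedBall_self zero_le_one⟩, ?_⟩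
        rw [dist_zero_right]
        exact mem_closedBall_zero_iff.mp hv.2
      · intro v hv
        refine ⟨0, ⟨Submodule.zero_mem _, mem_closedBall_self zero_le_one⟩, ?_⟩
        rw [dist_zero_right]
        exact mem_closedBall_zero_iff.mp hv.2
    have h1 : (100*((n:ℝ)+1))⁻¹ < bx + bY := lt_of_not_ge hcase
    have hn1 : (0:ℝ) < 100*((n:ℝ)+1) := by positivity
    have h2 : (1:ℝ) ≤ 100*((n:ℝ)+1)*(bx+bY) := by
      rw [inv_lt_iff_one_lt_mul₀ hn1] at h1
      linarith [h1]
    linarith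


end
end
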